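/- arXiv:2412.19121 — 7 statements merged into one kernel-verified Lean document; each statement's English description precedes it below -/
import Mathlib

section
/- Let (Ω, 𝒜, P) be a probability space and 𝒟, 𝒢 independent sub-σ-algebras of 𝒜. Let (E, ℰ) be a measurable space and Y : Ω → E be measurable with respect to 𝒟. Assume φ : E × Ω → ℝ^d is measurable with respect to the product σ-algebra ℰ ⊗ 𝒢 and that ω ↦ φ(Y(ω), ω) is integrable. Let N := {x ∈ E : φ(x, ·) is not integrable} and let μ be the law of Y on (E, ℰ). Then N ∈ ℰ and μ(N) = 0. -/
open MeasureTheory ProbabilityTheory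

theorem stmt_0 {Ω : Type*} (𝒟 𝒢 : MeasurableSpace Ω) [m𝒜 : MeasurableSpace Ω]
    (P : Measure Ω) [IsProbabilityMeasure P]
    (h𝒟 : 𝒟 ≤ m𝒜) (h𝒢 : 𝒢 ≤ m𝒜)
    (hindep : ProbabilityTheory.Indep 𝒟 𝒢 P)
    {E : Type*} [mE : MeasurableSpace E] (Y : Ω → E) (hY : Measurable[𝒟] Y)
    (d : ℕ) (φ : E × Ω → EuclideanSpace ℝ (Fin d))
    (hφ : Measurable[mE.prod 𝒢] φ)
    (hint : Integrable (fun ω => φ (Y ω, ω)) P) :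
    MeasurableSet {x : E | ¬ Integrable (fun ω => φ (x, ω)) P} ∧
      P.map Y {x : E | ¬ Integrable (fun ω => φ (x, ω)) P} = 0 := by
  -- id as a map to (Ω, 𝒢)
  have hid : @Measurable Ω Ω m𝒜 𝒢 id := measurable_id'' h𝒢
  have hYm : Measurable Y := hY.mono h𝒟 le_rfl
  -- independence of Y and id (as maps to (E, mE) and (Ω, 𝒢))
  have hYid : @IndepFun Ω E Ω m𝒜 mE 𝒢 Y id P := by
    have h1 : MeasurableSpace.comap Y mE ≤ 𝒟 := fun s ⟨t, ht, hts⟩ => hts ▸ hY ht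
    have h2 : MeasurableSpace.comap (id : Ω → Ω) 𝒢 ≤ 𝒢 := by
      rw [MeasurableSpace.comap_id]
    exact indep_of_indep_of_le_right (indep_of_indep_of_le_left hindep h1) h2
  set κ : @Measure Ω 𝒢 := @Measure.map Ω Ω m𝒜 𝒢 id P with hκ
  haveI : IsProbabilityMeasure κ := by
    constructor
    rw [hκ, Measure.map_apply hid MeasurableSet.univ]
    simp
  -- joint law is product of marginals
  have hmap : @Measure.map Ω (E × Ω) m𝒜 (mE.prod 𝒢) (fun ω => (Y ω, ω)) P
      = @Measure.prod E Ω mE 𝒢 (P.map Y) κ :=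
    (@indepFun_iff_map_prod_eq_prod_map_map Ω E Ω m𝒜 P Y id mE 𝒢 _
      hYm.aemeasurable (@Measurable.aemeasurable Ω Ω m𝒜 𝒢 id P hid)).mp hYid
  -- the nonnegative integrand
  set F : E × Ω → ENNReal := fun p => (‖φ p‖₊ : ENNReal) with hF
  have hFm : Measurable[mE.prod 𝒢] F := measurable_enorm.comp hφ
  have hpair : @Measurable Ω (E × Ω) m𝒜 (mE.prod 𝒢) (fun ω => (Y ω, ω)) :=
    @Measurable.prodMk Ω m𝒜 E Ω mE 𝒢 Y id hYm hid
  -- finiteness of the iterated integral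
  have hfin : ∫⁻ x, (∫⁻ ω, F (x, ω) ∂κ) ∂(P.map Y) < ⊤ := by
    have h1 : ∫⁻ p, F p ∂(@Measure.prod E Ω mE 𝒢 (P.map Y) κ) = ∫⁻ ω, F (Y ω, ω) ∂P := by
      rw [← hmap, @lintegral_map Ω (E × Ω) m𝒜 (mE.prod 𝒢) P F _ hFm hpair]
    have h2 := @MeasureTheory.lintegral_prod E Ω mE 𝒢 (P.map Y) κ _ F
      hFm.aemeasurable
    rw [← h2, h1]
    exact hint.2
  -- measurability of the inner integral
  have hg : Measurable fun x => ∫⁻ ω, F (x, ω) ∂κ :=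
    @Measurable.lintegral_prod_right' E Ω mE 𝒢 κ _ F hFm
  -- inner integral over κ equals inner integral over P
  have hinner : ∀ x : E, ∫⁻ ω, F (x, ω) ∂κ = ∫⁻ ω, F (x, ω) ∂P := by
    intro x
    have hx : Measurable[𝒢] fun ω => F (x, ω) :=
      hFm.comp (Measurable.prodMk measurable_const measurable_id)
    rw [hκ, @lintegral_map Ω Ω m𝒜 𝒢 P (fun ω => F (x, ω)) id hx hid]
    rfl
  -- characterization of integrability
  have hiff : ∀ x : E, Integrable (fun ω => φ (x, ω)) P ↔
      (∫⁻ ω, F (x, ω) ∂κ) < ⊤ := by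
    intro x
    have hmx : Measurable fun ω => φ (x, ω) :=
      hφ.comp (Measurable.prodMk measurable_const hid)
    rw [hinner x]
    exact ⟨fun h => h.2, fun h => ⟨hmx.aestronglyMeasurable, h⟩⟩
  have hset : {x : E | ¬ Integrable (fun ω => φ (x, ω)) P}
      = {x : E | (∫⁻ ω, F (x, ω) ∂κ) = ⊤} := by
    ext x
    simp [hiff x, lt_top_iff_ne_top]
  refine ⟨?_, ?_⟩
  · rw [hset]
    exact hg (measurableSet_singleton ⊤)
  · rw [hset]
    have h0 := ae_lt_top hg hfin.ne
    rw [ae_iff] at h0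
    have : {x : E | (∫⁻ ω, F (x, ω) ∂κ) = ⊤}
        = {x : E | ¬ (∫⁻ ω, F (x, ω) ∂κ) < ⊤} := by
      ext x; simp [lt_top_iff_ne_top]
    rw [this]
    exact h0
end

section
/- Let (Ω, 𝒜, P) be a probability space and 𝒟, 𝒢 independent sub-σ-algebras of 𝒜. Let (E, ℰ) be a measurable space and Y : Ω → E be measurable with respect to 𝒟. Assume φ : E × Ω → ℝ^d is measurable with respect to the product σ-algebra ℰ ⊗ 𝒢 and that ω ↦ φ(Y(ω), ω) is integrable. Let N := {x ∈ E : φ(x, ·) is not integrable}, and define Φ : E → ℝ^d by Φ(y) := 0 for y ∈ N and Φ(y) := E[φ(y, ·)] for y ∉ N. Then Φ is ℰ-measurable and the conditional expectation of ω ↦ φ(Y(ω), ω) given 𝒟 equals Φ(Y) P-almost surely. -/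
open MeasureTheory ProbabilityTheory
open scoped Classical

/-- Auxiliary general freezing lemma, stated with a separate "second coordinate" map `Z`
to avoid σ-algebra instance clashes. -/
theorem freezing_aux {α E β : Type*} (m : MeasurableSpace α) [mα : MeasurableSpace α]
    [mE : MeasurableSpace E] [mβ : MeasurableSpace β] (hm : m ≤ mα)
    (μ : Measure α) [IsProbabilityMeasure μ]
    (Y : α → E) (hY : Measurable[m] Y) (Z : α → β) (hZ : Measurable Z)
    (hkey : ∀ s : Set α, MeasurableSet[m] s → ∀ A : Set E, ∀ B : Set β,
      MeasurableSet A → MeasurableSet B →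
      μ (Y ⁻¹' A ∩ Z ⁻¹' B ∩ s) = μ (Y ⁻¹' A ∩ s) * μ (Z ⁻¹' B))
    (d : ℕ) (φ : E × β → EuclideanSpace ℝ (Fin d)) (hφ : Measurable φ)
    (hint : Integrable (fun a => φ (Y a, Z a)) μ)
    (Φ : E → EuclideanSpace ℝ (Fin d))
    (hΦ : ∀ x : E, Φ x = ∫ b, φ (x, b) ∂(Measure.map Z μ)) :
    Measurable Φ ∧ μ[fun a => φ (Y a, Z a)|m] =ᵐ[μ] fun a => Φ (Y a) := by
  haveI : IsFiniteMeasure (Measure.map Z μ) := Measure.isFiniteMeasure_map μ Z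
  haveI : SigmaFinite (μ.trim hm) := by
    refine @IsFiniteMeasure.toSigmaFinite α m _ ?_
    constructor
    rw [trim_measurableSet_eq hm MeasurableSet.univ]
    exact measure_lt_top μ _
  have hY' : Measurable Y := hY.mono hm le_rfl
  have hT : Measurable fun a => (Y a, Z a) := hY'.prodMk hZ
  have hφsm : StronglyMeasurable φ := hφ.stronglyMeasurable
  have hΦfun : Φ = fun x => ∫ b, φ (x, b) ∂(Measure.map Z μ) := funext hΦ
  have hΦmeas : Measurable Φ := by
    rw [hΦfun]; exact hφsm.integral_prod_right'.measurable
  refine ⟨hΦmeas, ?_⟩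
  have key : ∀ s : Set α, MeasurableSet[m] s →
      (Measure.map Y (μ.restrict s)).prod (Measure.map Z μ) =
        Measure.map (fun a => (Y a, Z a)) (μ.restrict s) := by
    intro s hs
    refine Measure.prod_eq fun A B hA hB => ?_
    rw [Measure.map_apply hT (hA.prod hB)]
    have hpre : (fun a => (Y a, Z a)) ⁻¹' (A ×ˢ B) = Y ⁻¹' A ∩ Z ⁻¹' B := rfl
    rw [hpre, Measure.restrict_apply ((hY' hA).inter (hZ hB)),
      Measure.map_apply hY' hA, Measure.restrict_apply (hY' hA),
      Measure.map_apply hZ hB]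
    exact hkey s hs A B hA hB
  have hmapP : Measure.map (fun a => (Y a, Z a)) μ =
      (Measure.map Y μ).prod (Measure.map Z μ) := by
    have := key Set.univ MeasurableSet.univ
    rwa [Measure.restrict_univ, eq_comm] at this
  have hφint : Integrable φ (Measure.map (fun a => (Y a, Z a)) μ) :=
    (integrable_map_measure hφsm.aestronglyMeasurable hT.aemeasurable).mpr hint
  have hφints : ∀ s : Set α, MeasurableSet[m] s →
      Integrable φ ((Measure.map Y (μ.restrict s)).prod (Measure.map Z μ)) := by
    intro s hs
    rw [key s hs]
    exact hφint.mono_measure (Measure.map_mono Measure.restrict_le_self hT)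
  have hΦYint : Integrable (fun a => Φ (Y a)) μ := by
    have h1 : Integrable (fun x => ∫ b, φ (x, b) ∂(Measure.map Z μ)) (Measure.map Y μ) := by
      have h2 := hφint
      rw [hmapP] at h2
      exact h2.integral_prod_left
    rw [hΦfun]
    exact (integrable_map_measure
      hφsm.integral_prod_right'.measurable.aestronglyMeasurable hY'.aemeasurable).mp h1
  have hset : ∀ s : Set α, MeasurableSet[m] s →
      ∫ a in s, Φ (Y a) ∂μ = ∫ a in s, φ (Y a, Z a) ∂μ := by
    intro s hs
    have h1 : ∫ a in s, Φ (Y a) ∂μ = ∫ x, Φ x ∂(Measure.map Y (μ.restrict s)) :=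
      (integral_map hY'.aemeasurable hΦmeas.aestronglyMeasurable).symm
    have h2 : ∫ x, Φ x ∂(Measure.map Y (μ.restrict s)) =
        ∫ z, φ z ∂((Measure.map Y (μ.restrict s)).prod (Measure.map Z μ)) := by
      rw [integral_prod _ (hφints s hs)]
      simp_rw [hΦfun]
    have h3 : ∫ z, φ z ∂((Measure.map Y (μ.restrict s)).prod (Measure.map Z μ)) =
        ∫ a in s, φ (Y a, Z a) ∂μ := by
      rw [key s hs]
      exact integral_map hT.aemeasurable hφsm.aestronglyMeasurable
    rw [h1, h2, h3]
  refine (ae_eq_condExp_of_forall_setIntegral_eq hm hint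
    (fun s hs _ => hΦYint.integrableOn) (fun s hs _ => hset s hs) ?_).symm
  exact StronglyMeasurable.aestronglyMeasurable ((hΦmeas.comp hY).stronglyMeasurable)

theorem stmt_1 {Ω : Type*} (𝒟 𝒢 : MeasurableSpace Ω) [m𝒜 : MeasurableSpace Ω]
    (P : Measure Ω) [IsProbabilityMeasure P]
    (h𝒟 : 𝒟 ≤ m𝒜) (h𝒢 : 𝒢 ≤ m𝒜)
    (hindep : ProbabilityTheory.Indep 𝒟 𝒢 P)
    {E : Type*} [mE : MeasurableSpace E] (Y : Ω → E) (hY : Measurable[𝒟] Y)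
    (d : ℕ) (φ : E × Ω → EuclideanSpace ℝ (Fin d))
    (hφ : Measurable[mE.prod 𝒢] φ)
    (hint : Integrable (fun ω => φ (Y ω, ω)) P)
    (Φ : E → EuclideanSpace ℝ (Fin d))
    (hΦdef : ∀ x : E, Φ x =
      if Integrable (fun ω => φ (x, ω)) P then ∫ ω, φ (x, ω) ∂P else 0) :
    Measurable Φ ∧ P[fun ω => φ (Y ω, ω)|𝒟] =ᵐ[P] fun ω => Φ (Y ω) := by
  have hZ : @Measurable Ω Ω m𝒜 𝒢 id := measurable_id'' h𝒢
  rw [Indep_iff] at hindep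
  have hkey : ∀ s : Set Ω, MeasurableSet[𝒟] s → ∀ A : Set E, ∀ B : Set Ω,
      MeasurableSet A → MeasurableSet[𝒢] B →
      P (Y ⁻¹' A ∩ id ⁻¹' B ∩ s) = P (Y ⁻¹' A ∩ s) * P (id ⁻¹' B) := by
    intro s hs A B hA hB
    have h : Y ⁻¹' A ∩ id ⁻¹' B ∩ s = (Y ⁻¹' A ∩ s) ∩ B := by
      ext ω; simp only [Set.mem_inter_iff, Set.mem_preimage, id]; tauto
    rw [h, hindep _ _ ((hY hA).inter hs) hB]
    rfl
  have hφx : ∀ x : E, Measurable[𝒢] (fun ω => φ (x, ω)) := fun x =>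
    hφ.comp (@measurable_prodMk_left E Ω mE 𝒢 x)
  have hmap_trim : @Measure.map Ω Ω m𝒜 𝒢 id P = P.trim h𝒢 := by
    refine @Measure.ext Ω 𝒢 _ _ fun B hB => ?_
    rw [Measure.map_apply hZ hB, trim_measurableSet_eq h𝒢 hB, Set.preimage_id]
  have hΦ : ∀ x : E, Φ x = ∫ b, φ (x, b) ∂(@Measure.map Ω Ω m𝒜 𝒢 id P) := by
    intro x
    rw [hmap_trim, hΦdef x]
    by_cases hx : Integrable (fun ω => φ (x, ω)) P
    · rw [if_pos hx]
      exact integral_trim h𝒢 (hφx x).stronglyMeasurable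
    · rw [if_neg hx]
      symm
      apply integral_undef
      intro h
      exact hx (integrable_of_integrable_trim h𝒢 h)
  exact @freezing_aux Ω E Ω 𝒟 m𝒜 mE 𝒢 h𝒟 P _ Y hY id hZ hkey d φ hφ hint Φ hΦ
end

section
/- Let α ∈ (0, 1) and T > 0. There exists a constant c > 0 (depending only on d, T, α) such that for all t ∈ (0, T] and all x, y ∈ ℝ^d: |∇p_t(x) − ∇p_t(y)| ≤ c · |x − y|^α · t^(−(1+α)/2) · (p_{4t}(x) + p_{4t}(y)). -/
open Real MeasureTheory

/-- The Gaussian heat kernel `p_t(x) = (4πt)^(-d/2) exp(-|x|²/(4t))`. -/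
noncomputable def heatKernel (d : ℕ) (t : ℝ) (x : EuclideanSpace ℝ (Fin d)) : ℝ :=
  (4 * Real.pi * t) ^ (-(d : ℝ) / 2) * Real.exp (-‖x‖ ^ 2 / (4 * t))

/-- The spatial gradient of the Gaussian heat kernel: `∇p_t(x) = -(x/(2t)) p_t(x)`. -/
noncomputable def heatKernelGrad (d : ℕ) (t : ℝ) (x : EuclideanSpace ℝ (Fin d)) :
    EuclideanSpace ℝ (Fin d) :=
  (-(heatKernel d t x) / (2 * t)) • x

lemma hk_nonneg (d : ℕ) (t : ℝ) (ht : 0 < t) (x : EuclideanSpace ℝ (Fin d)) :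
    0 ≤ heatKernel d t x := by
  unfold heatKernel; positivity

lemma sq_mul_exp_le (c s : ℝ) (hc : 0 < c) : s^2 * Real.exp (-(c*s^2)) ≤ 1/c := by
  have h := Real.add_one_le_exp (c*s^2)
  have he : 0 < Real.exp (c*s^2) := Real.exp_pos _
  rw [Real.exp_neg, ← div_eq_mul_inv, div_le_div_iff₀ he hc]
  nlinarith [sq_nonneg s]

lemma mul_exp_le (t s : ℝ) (ht : 0 < t) (hs : 0 ≤ s) :
    s * Real.exp (-(3*s^2)/(16*t)) ≤ 2 * Real.sqrt t := by
  have h1 : (s * Real.exp (-(3*s^2)/(16*t)))^2 ≤ 1/(3/(8*t)) := by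
    have h := sq_mul_exp_le (3/(8*t)) s (by positivity)
    calc (s * Real.exp (-(3*s^2)/(16*t)))^2
        = s^2 * Real.exp (-(3/(8*t)*s^2)) := by
          rw [mul_pow, pow_two (Real.exp _), ← Real.exp_add]
          congr 1
          field_simp
          ring
      _ ≤ 1/(3/(8*t)) := h
  have h2 : 1/(3/(8*t)) = 8*t/3 := by field_simp
  have h3 : 0 ≤ s * Real.exp (-(3*s^2)/(16*t)) := by positivity
  nlinarith [Real.sq_sqrt ht.le, Real.sqrt_nonneg t]

lemma abs_exp_sub_exp (a b : ℝ) :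
    |Real.exp (-a) - Real.exp (-b)| ≤ |a - b| * (Real.exp (-a) + Real.exp (-b)) := by
  wlog h : a ≤ b generalizing a b
  · have := this b a (le_of_not_ge h)
    rw [abs_sub_comm, abs_sub_comm a b]
    linarith [this]
  · have h1 : Real.exp (-b) = Real.exp (-a) * Real.exp (a - b) := by
      rw [← Real.exp_add]; congr 1; ring
    have h2 : a - b + 1 ≤ Real.exp (a - b) := Real.add_one_le_exp _
    have h3 : Real.exp (-a) - Real.exp (-b) ≥ 0 := by
      have := Real.exp_le_exp.mpr (neg_le_neg h)
      linarith
    rw [abs_of_nonneg h3, abs_of_nonpos (by linarith : a - b ≤ 0)]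
    nlinarith [Real.exp_pos (-a), Real.exp_pos (-b)]

lemma hk_factor (d : ℕ) (t : ℝ) (ht : 0 < t) (x : EuclideanSpace ℝ (Fin d)) :
    heatKernel d t x
      = 4 ^ ((d:ℝ)/2) * Real.exp (-(3*‖x‖^2)/(16*t)) * heatKernel d (4*t) x := by
  unfold heatKernel
  have h1 : 4*Real.pi*(4*t) = 4*(4*Real.pi*t) := by ring
  rw [h1, Real.mul_rpow (by norm_num : (0:ℝ) ≤ 4) (by positivity : (0:ℝ) ≤ 4*Real.pi*t)]
  have h2 : (4:ℝ) ^ ((d:ℝ)/2) * (4:ℝ) ^ (-(d:ℝ)/2) = 1 := by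
    rw [← Real.rpow_add (by norm_num : (0:ℝ) < 4)]
    have : (d:ℝ)/2 + -(d:ℝ)/2 = 0 := by ring
    rw [this, Real.rpow_zero]
  have h3 : Real.exp (-(3*‖x‖^2)/(16*t)) * Real.exp (-‖x‖^2/(4*(4*t)))
      = Real.exp (-‖x‖^2/(4*t)) := by
    rw [← Real.exp_add]; congr 1; field_simp; ring
  calc (4*Real.pi*t) ^ (-(d:ℝ)/2) * Real.exp (-‖x‖^2/(4*t))
      = ((4:ℝ)^((d:ℝ)/2) * (4:ℝ)^(-(d:ℝ)/2)) * ((4*Real.pi*t) ^ (-(d:ℝ)/2)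
          * (Real.exp (-(3*‖x‖^2)/(16*t)) * Real.exp (-‖x‖^2/(4*(4*t))))) := by
        rw [h2, h3]; ring
    _ = 4 ^ ((d:ℝ)/2) * Real.exp (-(3*‖x‖^2)/(16*t)) *
        ((4:ℝ)^(-(d:ℝ)/2) * (4*Real.pi*t) ^ (-(d:ℝ)/2) * Real.exp (-‖x‖^2/(4*(4*t)))) := by
        ring

lemma grad_norm (d : ℕ) (t : ℝ) (ht : 0 < t) (x : EuclideanSpace ℝ (Fin d)) :
    ‖heatKernelGrad d t x‖ = heatKernel d t x * ‖x‖ / (2*t) := by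
  unfold heatKernelGrad
  rw [norm_smul, Real.norm_eq_abs, abs_div, abs_neg, abs_of_nonneg (hk_nonneg d t ht x),
    abs_of_pos (by positivity : (0:ℝ) < 2*t)]
  ring

lemma grad_sub (d : ℕ) (t : ℝ) (ht : 0 < t) (x y : EuclideanSpace ℝ (Fin d)) :
    ‖heatKernelGrad d t x - heatKernelGrad d t y‖ ≤
      (heatKernel d t x * ‖x - y‖ + |heatKernel d t x - heatKernel d t y| * ‖y‖) / (2*t) := by
  have ht' : (2*t) ≠ 0 := by positivity
  have hid : heatKernelGrad d t x - heatKernelGrad d t y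
      = (-(1/(2*t))) • ((heatKernel d t x) • (x - y)
          + (heatKernel d t x - heatKernel d t y) • y) := by
    unfold heatKernelGrad
    match_scalars <;> field_simp <;> ring
  rw [hid, norm_smul, Real.norm_eq_abs, abs_neg, abs_of_pos (by positivity : (0:ℝ) < 1/(2*t))]
  calc 1/(2*t) * ‖(heatKernel d t x) • (x - y) + (heatKernel d t x - heatKernel d t y) • y‖
      ≤ 1/(2*t) * (‖(heatKernel d t x) • (x - y)‖ + ‖(heatKernel d t x - heatKernel d t y) • y‖) := by
        gcongr
        exact norm_add_le _ _
    _ = (heatKernel d t x * ‖x - y‖ + |heatKernel d t x - heatKernel d t y| * ‖y‖) / (2*t) := by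
        rw [norm_smul, norm_smul, Real.norm_eq_abs, Real.norm_eq_abs,
          abs_of_nonneg (hk_nonneg d t ht x)]
        ring

lemma hk_diff (d : ℕ) (t : ℝ) (ht : 0 < t) (x y : EuclideanSpace ℝ (Fin d)) :
    |heatKernel d t x - heatKernel d t y| ≤
      (‖x - y‖ * (‖x‖ + ‖y‖) / (4*t)) * (heatKernel d t x + heatKernel d t y) := by
  unfold heatKernel
  set K := (4 * Real.pi * t) ^ (-(d:ℝ)/2) with hK
  have hKpos : 0 < K := by rw [hK]; positivity
  have e1 : -‖x‖^2/(4*t) = -(‖x‖^2/(4*t)) := by ring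
  have e2 : -‖y‖^2/(4*t) = -(‖y‖^2/(4*t)) := by ring
  rw [e1, e2]
  have h := abs_exp_sub_exp (‖x‖^2/(4*t)) (‖y‖^2/(4*t))
  have habs : |‖x‖^2/(4*t) - ‖y‖^2/(4*t)| ≤ ‖x - y‖ * (‖x‖ + ‖y‖) / (4*t) := by
    have h1 : |‖x‖^2/(4*t) - ‖y‖^2/(4*t)| = |‖x‖^2 - ‖y‖^2| / (4*t) := by
      rw [div_sub_div_same, abs_div, abs_of_pos (by positivity : (0:ℝ) < 4*t)]
    rw [h1]
    have h2 : |‖x‖^2 - ‖y‖^2| ≤ ‖x - y‖ * (‖x‖ + ‖y‖) := by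
      have h3 : ‖x‖^2 - ‖y‖^2 = (‖x‖ - ‖y‖) * (‖x‖ + ‖y‖) := by ring
      rw [h3, abs_mul, abs_of_nonneg (by positivity : (0:ℝ) ≤ ‖x‖ + ‖y‖)]
      exact mul_le_mul_of_nonneg_right (abs_norm_sub_norm_le x y) (by positivity)
    gcongr
  calc |K * Real.exp (-(‖x‖^2/(4*t))) - K * Real.exp (-(‖y‖^2/(4*t)))|
      = K * |Real.exp (-(‖x‖^2/(4*t))) - Real.exp (-(‖y‖^2/(4*t)))| := by
        rw [← mul_sub, abs_mul, abs_of_pos hKpos]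
    _ ≤ K * (|‖x‖^2/(4*t) - ‖y‖^2/(4*t)| * (Real.exp (-(‖x‖^2/(4*t))) + Real.exp (-(‖y‖^2/(4*t))))) := by
        gcongr
    _ ≤ (‖x - y‖ * (‖x‖ + ‖y‖) / (4*t)) * (K * Real.exp (-(‖x‖^2/(4*t))) + K * Real.exp (-(‖y‖^2/(4*t)))) := by
        nlinarith [Real.exp_pos (-(‖x‖^2/(4*t))), Real.exp_pos (-(‖y‖^2/(4*t))), hKpos,
          abs_nonneg (‖x‖^2/(4*t) - ‖y‖^2/(4*t)), mul_le_mul_of_nonneg_right habs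
            (by positivity : (0:ℝ) ≤ Real.exp (-(‖x‖^2/(4*t))) + Real.exp (-(‖y‖^2/(4*t))))]

lemma exp_neg_div_le_one (a t : ℝ) (ha : 0 ≤ a) (ht : 0 < t) :
    Real.exp (-(3*a)/(16*t)) ≤ 1 := by
  have h0 : -(3*a)/(16*t) ≤ 0 :=
    div_nonpos_of_nonpos_of_nonneg (neg_nonpos.mpr (by positivity)) (by positivity)
  calc Real.exp (-(3*a)/(16*t)) ≤ Real.exp 0 := Real.exp_le_exp.mpr h0
    _ = 1 := Real.exp_zero

lemma hk_le (d : ℕ) (t : ℝ) (ht : 0 < t) (x : EuclideanSpace ℝ (Fin d)) :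
    heatKernel d t x ≤ 4 ^ ((d:ℝ)/2) * heatKernel d (4*t) x := by
  rw [hk_factor d t ht x]
  have h1 : Real.exp (-(3*‖x‖^2)/(16*t)) ≤ 1 := exp_neg_div_le_one _ t (by positivity) ht
  have hA : (0:ℝ) < 4 ^ ((d:ℝ)/2) := Real.rpow_pos_of_pos (by norm_num) _
  have hq : 0 ≤ heatKernel d (4*t) x := hk_nonneg d (4*t) (by positivity) x
  calc 4 ^ ((d:ℝ)/2) * Real.exp (-(3*‖x‖^2)/(16*t)) * heatKernel d (4*t) x
      = (4 ^ ((d:ℝ)/2) * heatKernel d (4*t) x) * Real.exp (-(3*‖x‖^2)/(16*t)) := by ring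
    _ ≤ (4 ^ ((d:ℝ)/2) * heatKernel d (4*t) x) * 1 :=
        mul_le_mul_of_nonneg_left h1 (mul_nonneg hA.le hq)
    _ = 4 ^ ((d:ℝ)/2) * heatKernel d (4*t) x := by ring

lemma grad_le (d : ℕ) (t : ℝ) (ht : 0 < t) (x : EuclideanSpace ℝ (Fin d)) :
    ‖heatKernelGrad d t x‖ ≤ 4 ^ ((d:ℝ)/2) * t ^ (-(1:ℝ)/2) * heatKernel d (4*t) x := by
  have hA : (0:ℝ) < 4 ^ ((d:ℝ)/2) := Real.rpow_pos_of_pos (by norm_num) _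
  have hq : 0 ≤ heatKernel d (4*t) x := hk_nonneg d (4*t) (by positivity) x
  have hlin := mul_exp_le t ‖x‖ ht (norm_nonneg x)
  have hsqt : Real.sqrt t / t = t ^ (-(1:ℝ)/2) := by
    have h : t ^ (-(1:ℝ)/2) = t ^ ((1:ℝ)/2 - 1) := by norm_num
    rw [h, Real.rpow_sub ht, Real.rpow_one, Real.sqrt_eq_rpow]
  rw [grad_norm d t ht x, hk_factor d t ht x]
  calc 4 ^ ((d:ℝ)/2) * Real.exp (-(3*‖x‖^2)/(16*t)) * heatKernel d (4*t) x * ‖x‖ / (2*t)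
      = (4 ^ ((d:ℝ)/2) * heatKernel d (4*t) x * (‖x‖ * Real.exp (-(3*‖x‖^2)/(16*t)))) / (2*t) := by
        ring
    _ ≤ (4 ^ ((d:ℝ)/2) * heatKernel d (4*t) x * (2 * Real.sqrt t)) / (2*t) := by
        apply div_le_div_of_nonneg_right ?_ (by positivity)
        exact mul_le_mul_of_nonneg_left hlin (mul_nonneg hA.le hq)
    _ = 4 ^ ((d:ℝ)/2) * (Real.sqrt t / t) * heatKernel d (4*t) x := by
        field_simp
    _ = 4 ^ ((d:ℝ)/2) * t ^ (-(1:ℝ)/2) * heatKernel d (4*t) x := by rw [hsqt]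

set_option maxHeartbeats 2000000 in
theorem stmt_6 (d : ℕ) (α T : ℝ) (hα0 : 0 < α) (hα1 : α < 1) (hT : 0 < T) :
    ∃ c : ℝ, 0 < c ∧ ∀ t : ℝ, 0 < t → t ≤ T → ∀ x y : EuclideanSpace ℝ (Fin d),
      ‖heatKernelGrad d t x - heatKernelGrad d t y‖ ≤
        c * ‖x - y‖ ^ α * t ^ (-(1 + α) / 2) *
          (heatKernel d (4 * t) x + heatKernel d (4 * t) y) := by
  have hA : (0:ℝ) < 4 ^ ((d:ℝ)/2) := Real.rpow_pos_of_pos (by norm_num) _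
  refine ⟨4 * 4 ^ ((d:ℝ)/2), by positivity, ?_⟩
  intro t ht _ x y
  set A : ℝ := 4 ^ ((d:ℝ)/2) with hAdef
  set q1 := heatKernel d (4*t) x with hq1def
  set q2 := heatKernel d (4*t) y with hq2def
  have h4t : (0:ℝ) < 4*t := by positivity
  have h2t : (0:ℝ) < 2*t := by positivity
  have hq1 : 0 ≤ q1 := hk_nonneg d (4*t) h4t x
  have hq2 : 0 ≤ q2 := hk_nonneg d (4*t) h4t y
  have htp : (0:ℝ) < t ^ (-(1+α)/2) := Real.rpow_pos_of_pos ht _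
  have hrnn : (0:ℝ) ≤ ‖x - y‖ := norm_nonneg _
  by_cases hxy : x = y
  · subst hxy
    simp only [sub_self, norm_zero]
    exact mul_nonneg (mul_nonneg (mul_nonneg (by positivity)
      (Real.rpow_nonneg le_rfl _)) htp.le) (add_nonneg hq1 hq2)
  have hr0 : 0 < ‖x - y‖ := norm_sub_pos_iff.mpr hxy
  rcases le_total t (‖x - y‖^2) with hc1 | hc2
  · -- case t ≤ ‖x-y‖²
    have hsq : Real.sqrt t ≤ ‖x - y‖ := by
      calc Real.sqrt t ≤ Real.sqrt (‖x - y‖^2) := Real.sqrt_le_sqrt hc1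
        _ = ‖x - y‖ := Real.sqrt_sq hrnn
    have hpow : t ^ (-(1:ℝ)/2) ≤ ‖x - y‖^α * t^(-(1+α)/2) := by
      have h1 : t ^ (α/2) ≤ ‖x - y‖ ^ α := by
        have h2 : t ^ (α/2) = (Real.sqrt t) ^ α := by
          rw [Real.sqrt_eq_rpow, ← Real.rpow_mul ht.le]
          congr 1; ring
        rw [h2]
        exact Real.rpow_le_rpow (Real.sqrt_nonneg t) hsq hα0.le
      calc t ^ (-(1:ℝ)/2) = t^(α/2) * t^(-(1+α)/2) := by
            rw [← Real.rpow_add ht]; congr 1; ring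
        _ ≤ ‖x - y‖^α * t^(-(1+α)/2) := mul_le_mul_of_nonneg_right h1 htp.le
    calc ‖heatKernelGrad d t x - heatKernelGrad d t y‖
        ≤ ‖heatKernelGrad d t x‖ + ‖heatKernelGrad d t y‖ := norm_sub_le _ _
      _ ≤ A * t^(-(1:ℝ)/2) * q1 + A * t^(-(1:ℝ)/2) * q2 :=
          add_le_add (grad_le d t ht x) (grad_le d t ht y)
      _ = A * t^(-(1:ℝ)/2) * (q1 + q2) := by ring
      _ ≤ A * (‖x - y‖^α * t^(-(1+α)/2)) * (q1 + q2) := by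
          apply mul_le_mul_of_nonneg_right ?_ (add_nonneg hq1 hq2)
          exact mul_le_mul_of_nonneg_left hpow hA.le
      _ ≤ 4*A * ‖x - y‖^α * t^(-(1+α)/2) * (q1 + q2) := by
          nlinarith [mul_nonneg (mul_nonneg (Real.rpow_nonneg hrnn α) htp.le)
            (add_nonneg hq1 hq2), hA]
  · -- case ‖x-y‖² ≤ t
    have hrt : ‖x - y‖ ≤ Real.sqrt t := by
      calc ‖x - y‖ = Real.sqrt (‖x - y‖^2) := (Real.sqrt_sq hrnn).symm
        _ ≤ Real.sqrt t := Real.sqrt_le_sqrt hc2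
    have hst : (Real.sqrt t)^2 = t := Real.sq_sqrt ht.le
    have hs0 : 0 ≤ Real.sqrt t := Real.sqrt_nonneg t
    have hab := abs_le.mp (abs_norm_sub_norm_le x y)
    have hSx : (‖x‖ + ‖y‖) * ‖y‖ ≤ 4*(‖x‖^2 + t) := by
      nlinarith [norm_nonneg x, norm_nonneg y, hab.1, hab.2, hrt, hst, hs0, hrnn,
        sq_nonneg (‖x‖ - Real.sqrt t)]
    have hSy : (‖x‖ + ‖y‖) * ‖y‖ ≤ 4*(‖y‖^2 + t) := by
      nlinarith [norm_nonneg x, norm_nonneg y, hab.1, hab.2, hrt, hst, hs0, hrnn,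
        sq_nonneg (‖y‖ - Real.sqrt t)]
    have hgauss : ∀ s : ℝ, 0 ≤ s → s^2 * Real.exp (-(3*s^2)/(16*t)) ≤ 6*t := by
      intro s hs
      have h := sq_mul_exp_le (3/(16*t)) s (by positivity)
      have e : -(3/(16*t)*s^2) = -(3*s^2)/(16*t) := by ring
      rw [e] at h
      have e2 : 1/(3/(16*t)) = 16*t/3 := by field_simp
      rw [e2] at h
      linarith
    have hSp : ∀ z : EuclideanSpace ℝ (Fin d),
        (‖x‖ + ‖y‖) * ‖y‖ ≤ 4*(‖z‖^2 + t) →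
        (‖x‖ + ‖y‖) * ‖y‖ * heatKernel d t z ≤ 28*A*t*heatKernel d (4*t) z := by
      intro z hSz
      rw [hk_factor d t ht z]
      have hqz : 0 ≤ heatKernel d (4*t) z := hk_nonneg d (4*t) h4t z
      have hE1 : Real.exp (-(3*‖z‖^2)/(16*t)) ≤ 1 := exp_neg_div_le_one _ t (by positivity) ht
      have hEpos := Real.exp_pos (-(3*‖z‖^2)/(16*t))
      have hgz := hgauss ‖z‖ (norm_nonneg z)
      have h1 : (‖x‖ + ‖y‖) * ‖y‖ * Real.exp (-(3*‖z‖^2)/(16*t)) ≤ 28*t := by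
        have h2 := mul_le_mul_of_nonneg_right hSz hEpos.le
        nlinarith [ht]
      calc (‖x‖ + ‖y‖) * ‖y‖ * (A * Real.exp (-(3*‖z‖^2)/(16*t)) * heatKernel d (4*t) z)
          = (A * heatKernel d (4*t) z) * ((‖x‖ + ‖y‖) * ‖y‖ * Real.exp (-(3*‖z‖^2)/(16*t))) := by
            ring
        _ ≤ (A * heatKernel d (4*t) z) * (28*t) :=
            mul_le_mul_of_nonneg_left h1 (mul_nonneg hA.le hqz)
        _ = 28*A*t*heatKernel d (4*t) z := by ring
    have hSpx := hSp x hSx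
    have hSpy := hSp y hSy
    have hT2 : (‖x - y‖*(‖x‖ + ‖y‖)/(4*t)) * (heatKernel d t x + heatKernel d t y) * ‖y‖
        ≤ 7*A*‖x - y‖*(q1 + q2) := by
      have expand : (‖x - y‖*(‖x‖ + ‖y‖)/(4*t)) * (heatKernel d t x + heatKernel d t y) * ‖y‖
          = (‖x - y‖/(4*t)) * ((‖x‖ + ‖y‖)*‖y‖*heatKernel d t x
              + (‖x‖ + ‖y‖)*‖y‖*heatKernel d t y) := by ring
      rw [expand]
      have h3 : (‖x‖ + ‖y‖)*‖y‖*heatKernel d t x + (‖x‖ + ‖y‖)*‖y‖*heatKernel d t y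
          ≤ 28*A*t*(q1 + q2) := by
        have : 28*A*t*(q1 + q2) = 28*A*t*q1 + 28*A*t*q2 := by ring
        rw [this]; exact add_le_add hSpx hSpy
      calc (‖x - y‖/(4*t)) * ((‖x‖ + ‖y‖)*‖y‖*heatKernel d t x
            + (‖x‖ + ‖y‖)*‖y‖*heatKernel d t y)
          ≤ (‖x - y‖/(4*t)) * (28*A*t*(q1 + q2)) :=
            mul_le_mul_of_nonneg_left h3 (by positivity)
        _ = 7*A*‖x - y‖*(q1 + q2) := by field_simp; ring
    have hmain : ‖heatKernelGrad d t x - heatKernelGrad d t y‖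
        ≤ 4*A*(‖x - y‖/t)*(q1 + q2) := by
      calc ‖heatKernelGrad d t x - heatKernelGrad d t y‖
          ≤ (heatKernel d t x * ‖x - y‖ + |heatKernel d t x - heatKernel d t y| * ‖y‖) / (2*t) :=
            grad_sub d t ht x y
        _ ≤ (A*q1*‖x - y‖ + (‖x - y‖*(‖x‖ + ‖y‖)/(4*t)) * (heatKernel d t x + heatKernel d t y) * ‖y‖) / (2*t) := by
            apply div_le_div_of_nonneg_right ?_ h2t.le
            apply add_le_add
            · exact mul_le_mul_of_nonneg_right (hk_le d t ht x) hrnn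
            · exact mul_le_mul_of_nonneg_right (hk_diff d t ht x y) (norm_nonneg y)
        _ ≤ (A*q1*‖x - y‖ + 7*A*‖x - y‖*(q1 + q2)) / (2*t) := by
            apply div_le_div_of_nonneg_right ?_ h2t.le
            exact add_le_add_right hT2 _
        _ ≤ (8*A*‖x - y‖*(q1 + q2)) / (2*t) := by
            apply div_le_div_of_nonneg_right ?_ h2t.le
            nlinarith [mul_nonneg (mul_nonneg hA.le hq2) hrnn, hA, hq1, hq2, hrnn,
              mul_nonneg (mul_nonneg hA.le hq1) hrnn]
        _ = 4*A*(‖x - y‖/t)*(q1 + q2) := by field_simp; ring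
    have hfrac : ‖x - y‖/t ≤ ‖x - y‖^α * t^(-(1+α)/2) := by
      have h1 : ‖x - y‖ ≤ ‖x - y‖^α * t^((1-α)/2) := by
        have e1 : ‖x - y‖ = ‖x - y‖^α * ‖x - y‖^((1:ℝ)-α) := by
          rw [← Real.rpow_add hr0, show α + ((1:ℝ)-α) = (1:ℝ) by ring, Real.rpow_one]
        nth_rewrite 1 [e1]
        apply mul_le_mul_of_nonneg_left ?_ (Real.rpow_nonneg hrnn α)
        calc ‖x - y‖^((1:ℝ)-α) ≤ (Real.sqrt t)^((1:ℝ)-α) :=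
              Real.rpow_le_rpow hrnn hrt (by linarith)
          _ = t^((1-α)/2) := by
              rw [Real.sqrt_eq_rpow, ← Real.rpow_mul ht.le]
              congr 1; ring
      calc ‖x - y‖/t ≤ (‖x - y‖^α * t^((1-α)/2))/t := div_le_div_of_nonneg_right h1 ht.le
        _ = ‖x - y‖^α * (t^((1-α)/2) / t^(1:ℝ)) := by rw [Real.rpow_one]; ring
        _ = ‖x - y‖^α * t^((1-α)/2 - 1) := by rw [← Real.rpow_sub ht]
        _ = ‖x - y‖^α * t^(-(1+α)/2) := by
            rw [show (1-α)/2 - 1 = -(1+α)/2 by ring]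
    calc ‖heatKernelGrad d t x - heatKernelGrad d t y‖
        ≤ 4*A*(‖x - y‖/t)*(q1 + q2) := hmain
      _ ≤ 4*A*(‖x - y‖^α * t^(-(1+α)/2))*(q1 + q2) := by
          apply mul_le_mul_of_nonneg_right ?_ (add_nonneg hq1 hq2)
          apply mul_le_mul_of_nonneg_left hfrac (by positivity)
      _ = 4*A * ‖x - y‖^α * t^(-(1+α)/2) * (q1 + q2) := by ring
end

section
/- Let α ∈ (0, 1) and T > 0. There exists a constant c > 0 (depending only on d, T, α) such that for all 0 < s < t ≤ T and all x ∈ ℝ^d: |p_t(x) − p_s(x)| ≤ c · (t − s)^(α/2) · (t^(−α/2) · p_{2t}(x) + s^(−α/2) · p_{2s}(x)). -/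
set_option maxHeartbeats 1000000

open Real MeasureTheory

lemma aux_pow (u k : ℝ) (hu0 : 0 ≤ u) (hu1 : u ≤ 1) (hk : 0 ≤ k) :
    1 - u ^ k ≤ (k + 1) * (1 - u) := by
  rcases le_or_gt k 1 with h1 | h1
  · rcases eq_or_lt_of_le hu0 with h0 | h0
    · rcases eq_or_lt_of_le hk with hk0 | hk0
      · rw [← hk0, Real.rpow_zero]; nlinarith
      · rw [← h0, Real.zero_rpow (ne_of_gt hk0)]; nlinarith
    · have h := Real.rpow_le_rpow_of_exponent_ge h0 hu1 h1
      rw [Real.rpow_one] at h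
      nlinarith
  · have hb := one_add_mul_self_le_rpow_one_add (s := u - 1) (p := k) (by linarith) h1.le
    have he : (1 + (u - 1)) = u := by ring
    rw [he] at hb
    nlinarith

lemma aux_uexp (u : ℝ) : u * Real.exp (-u) ≤ 2 * Real.exp (-(u/2)) := by
  have h := Real.add_one_le_exp (u/2)
  have h2 : u ≤ 2 * Real.exp (u/2) := by nlinarith [Real.exp_pos (u/2)]
  calc u * Real.exp (-u) ≤ (2 * Real.exp (u/2)) * Real.exp (-u) :=
        mul_le_mul_of_nonneg_right h2 (Real.exp_pos _).le
    _ = 2 * Real.exp (-(u/2)) := by rw [mul_assoc, ← Real.exp_add]; ring_nf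

lemma aux_exp (v : ℝ) : 1 - Real.exp (-v) ≤ v := by
  have h := Real.add_one_le_exp (-v)
  linarith

lemma half_pow (k t : ℝ) (hk : 0 ≤ k) (ht : 0 < t) :
    (t/2) ^ (-k) = 2 ^ k * t ^ (-k) := by
  rw [Real.div_rpow ht.le (by norm_num : (0:ℝ) ≤ 2),
    Real.rpow_neg (by norm_num : (0:ℝ) ≤ 2), div_eq_mul_inv, inv_inv, mul_comm]

lemma case1 (k a s t α : ℝ) (hk : 0 ≤ k) (ha : 0 ≤ a) (hs : 0 < s) (hst : s < t)
    (hc : t ≤ 2*s) (hα0 : 0 < α) (hα1 : α ≤ 2) :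
    |t ^ (-k) * Real.exp (-(a/t)) - s ^ (-k) * Real.exp (-(a/s))|
      ≤ (k+5) * 2 ^ k * ((t-s)/t) ^ (α/2) * (t ^ (-k) * Real.exp (-(a/(2*t)))) := by
  have ht : 0 < t := hs.trans hst
  have hts : 0 < t - s := sub_pos.mpr hst
  have hEt2 : Real.exp (-(a/t)) ≤ Real.exp (-(a/(2*t))) := by
    apply Real.exp_le_exp.mpr
    have : a/(2*t) ≤ a/t := by
      rw [div_le_div_iff₀ (by positivity) ht]; nlinarith
    linarith
  have hEtEs : Real.exp (-(a/s)) ≤ Real.exp (-(a/t)) := by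
    apply Real.exp_le_exp.mpr
    have : a/t ≤ a/s := by rw [div_le_div_iff₀ ht hs]; nlinarith
    linarith
  have htk_le : t ^ (-k) ≤ s ^ (-k) :=
    Real.rpow_le_rpow_of_nonpos hs hst.le (neg_nonpos.mpr hk)
  have hs2 : s ^ (-k) ≤ 2 ^ k * t ^ (-k) := by
    rw [← half_pow k t hk ht]
    exact Real.rpow_le_rpow_of_nonpos (by linarith) (by linarith) (neg_nonpos.mpr hk)
  have hRge : (t-s)/t ≤ ((t-s)/t) ^ (α/2) := by
    have h0 : 0 < (t-s)/t := div_pos hts ht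
    have h1 : (t-s)/t ≤ 1 := by rw [div_le_one ht]; linarith
    have h := Real.rpow_le_rpow_of_exponent_ge h0 h1 (by linarith : α/2 ≤ 1)
    rwa [Real.rpow_one] at h
  -- X term
  have hm : s ^ (-k) * (s/t) ^ k = t ^ (-k) := by
    rw [Real.div_rpow hs.le ht.le, Real.rpow_neg hs.le, Real.rpow_neg ht.le]
    have h1 : (0:ℝ) < s ^ k := Real.rpow_pos_of_pos hs k
    have h2 : (0:ℝ) < t ^ k := Real.rpow_pos_of_pos ht k
    field_simp
  have hpow := aux_pow (s/t) k (by positivity) (by rw [div_le_one ht]; linarith) hk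
  have hX : s ^ (-k) - t ^ (-k) ≤ (k+1) * ((t-s)/t) * s ^ (-k) := by
    have h1 : 1 - s/t = (t-s)/t := by field_simp
    calc s ^ (-k) - t ^ (-k) = s ^ (-k) * (1 - (s/t) ^ k) := by rw [mul_sub, mul_one, hm]
      _ ≤ s ^ (-k) * ((k+1) * (1 - s/t)) :=
          mul_le_mul_of_nonneg_left hpow (Real.rpow_nonneg hs.le _)
      _ = (k+1) * ((t-s)/t) * s ^ (-k) := by rw [h1]; ring
  -- Y term
  have hEsplit : Real.exp (-(a/s)) = Real.exp (-(a/t)) * Real.exp (-(a/s - a/t)) := by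
    rw [← Real.exp_add]; ring_nf
  have hY1 : Real.exp (-(a/t)) - Real.exp (-(a/s)) ≤ (a/s - a/t) * Real.exp (-(a/t)) := by
    rw [hEsplit]
    have h := aux_exp (a/s - a/t)
    nlinarith [Real.exp_pos (-(a/t))]
  have hv2 : a/s - a/t ≤ 2*(a/t)*((t-s)/t) := by
    have h1 : a/s - a/t = a*(t-s)/(s*t) := by field_simp
    have h2 : 2*(a/t)*((t-s)/t) = 2*(a*(t-s))*(s/t)/(s*t) := by field_simp
    rw [h1, h2, div_le_div_iff₀ (by positivity) (by positivity)]
    have h3 : 1/2 ≤ s/t := by rw [le_div_iff₀ ht]; linarith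
    nlinarith [mul_nonneg (mul_nonneg (by linarith : (0:ℝ) ≤ s/t - 1/2) (mul_nonneg ha hts.le)) (mul_pos hs ht).le]
  have hY2 : (a/t) * Real.exp (-(a/t)) ≤ 2 * Real.exp (-(a/(2*t))) := by
    have h := aux_uexp (a/t)
    have he : a/t/2 = a/(2*t) := by ring
    rwa [he] at h
  -- abs bound
  have hX1 : 0 ≤ (s ^ (-k) - t ^ (-k)) * Real.exp (-(a/t)) :=
    mul_nonneg (by linarith) (Real.exp_pos _).le
  have hY0 : 0 ≤ s ^ (-k) * (Real.exp (-(a/t)) - Real.exp (-(a/s))) :=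
    mul_nonneg (Real.rpow_nonneg hs.le _) (by linarith)
  have habs : |t ^ (-k) * Real.exp (-(a/t)) - s ^ (-k) * Real.exp (-(a/s))|
      ≤ (s ^ (-k) - t ^ (-k)) * Real.exp (-(a/t))
        + s ^ (-k) * (Real.exp (-(a/t)) - Real.exp (-(a/s))) := by
    rw [abs_le]
    constructor <;> nlinarith [hX1, hY0]
  have hnn1 : 0 ≤ (k+1) * ((t-s)/t) := by positivity
  have hfinal1 : (s ^ (-k) - t ^ (-k)) * Real.exp (-(a/t))
      ≤ (k+1) * ((t-s)/t) * (2 ^ k * t ^ (-k)) * Real.exp (-(a/(2*t))) := by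
    calc (s ^ (-k) - t ^ (-k)) * Real.exp (-(a/t))
        ≤ ((k+1) * ((t-s)/t) * s ^ (-k)) * Real.exp (-(a/(2*t))) :=
          mul_le_mul hX hEt2 (Real.exp_pos _).le
            (mul_nonneg hnn1 (Real.rpow_nonneg hs.le _))
      _ ≤ ((k+1) * ((t-s)/t) * (2 ^ k * t ^ (-k))) * Real.exp (-(a/(2*t))) := by
          apply mul_le_mul_of_nonneg_right _ (Real.exp_pos _).le
          exact mul_le_mul_of_nonneg_left hs2 hnn1
  have hfinal2 : s ^ (-k) * (Real.exp (-(a/t)) - Real.exp (-(a/s)))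
      ≤ 4 * ((t-s)/t) * (2 ^ k * t ^ (-k)) * Real.exp (-(a/(2*t))) := by
    have hsk : 0 ≤ s ^ (-k) := Real.rpow_nonneg hs.le _
    calc s ^ (-k) * (Real.exp (-(a/t)) - Real.exp (-(a/s)))
        ≤ s ^ (-k) * ((a/s - a/t) * Real.exp (-(a/t))) :=
          mul_le_mul_of_nonneg_left hY1 hsk
      _ ≤ s ^ (-k) * ((2*(a/t)*((t-s)/t)) * Real.exp (-(a/t))) := by
          apply mul_le_mul_of_nonneg_left _ hsk
          exact mul_le_mul_of_nonneg_right hv2 (Real.exp_pos _).le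
      _ = (2*((t-s)/t) * s ^ (-k)) * ((a/t) * Real.exp (-(a/t))) := by ring
      _ ≤ (2*((t-s)/t) * s ^ (-k)) * (2 * Real.exp (-(a/(2*t)))) := by
          apply mul_le_mul_of_nonneg_left hY2
          have : 0 ≤ (t-s)/t := by positivity
          positivity
      _ = (4*((t-s)/t)) * s ^ (-k) * Real.exp (-(a/(2*t))) := by ring
      _ ≤ (4*((t-s)/t)) * (2 ^ k * t ^ (-k)) * Real.exp (-(a/(2*t))) := by
          apply mul_le_mul_of_nonneg_right _ (Real.exp_pos _).le
          apply mul_le_mul_of_nonneg_left hs2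
          positivity
  have hmid : |t ^ (-k) * Real.exp (-(a/t)) - s ^ (-k) * Real.exp (-(a/s))|
      ≤ (k+5) * ((t-s)/t) * (2 ^ k * t ^ (-k)) * Real.exp (-(a/(2*t))) := by
    refine habs.trans ?_
    nlinarith [hfinal1, hfinal2]
  refine hmid.trans ?_
  have h1 : 0 ≤ (k+5) * (2 ^ k * t ^ (-k)) * Real.exp (-(a/(2*t))) := by positivity
  calc (k+5) * ((t-s)/t) * (2 ^ k * t ^ (-k)) * Real.exp (-(a/(2*t)))
      = ((t-s)/t) * ((k+5) * (2 ^ k * t ^ (-k)) * Real.exp (-(a/(2*t)))) := by ring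
    _ ≤ ((t-s)/t) ^ (α/2) * ((k+5) * (2 ^ k * t ^ (-k)) * Real.exp (-(a/(2*t)))) :=
        mul_le_mul_of_nonneg_right hRge h1
    _ = (k+5) * 2 ^ k * ((t-s)/t) ^ (α/2) * (t ^ (-k) * Real.exp (-(a/(2*t)))) := by ring


lemma case2 (k a s t α : ℝ) (hk : 0 ≤ k) (ha : 0 ≤ a) (hs : 0 < s) (hst : s < t)
    (hc : 2*s < t) (hα0 : 0 < α) (hα1 : α ≤ 2) :
    |t ^ (-k) * Real.exp (-(a/t)) - s ^ (-k) * Real.exp (-(a/s))|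
      ≤ 2 ^ k * (2 * ((t-s)/t) ^ (α/2) * (t ^ (-k) * Real.exp (-(a/(2*t))))
          + ((t-s)/s) ^ (α/2) * (s ^ (-k) * Real.exp (-(a/(2*s))))) := by
  have ht : 0 < t := hs.trans hst
  have hts : 0 < t - s := sub_pos.mpr hst
  have hEt2 : Real.exp (-(a/t)) ≤ Real.exp (-(a/(2*t))) := by
    apply Real.exp_le_exp.mpr
    have : a/(2*t) ≤ a/t := by
      rw [div_le_div_iff₀ (by positivity) ht]; nlinarith
    linarith
  have hEs2 : Real.exp (-(a/s)) ≤ Real.exp (-(a/(2*s))) := by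
    apply Real.exp_le_exp.mpr
    have : a/(2*s) ≤ a/s := by
      rw [div_le_div_iff₀ (by positivity) hs]; nlinarith
    linarith
  have htk0 : 0 ≤ t ^ (-k) := Real.rpow_nonneg ht.le _
  have hsk0 : 0 ≤ s ^ (-k) := Real.rpow_nonneg hs.le _
  have hR : (1:ℝ)/2 ≤ ((t-s)/t) ^ (α/2) := by
    have h1 : (1:ℝ)/2 ≤ (t-s)/t := by rw [le_div_iff₀ ht]; linarith
    have h2 : ((1:ℝ)/2) ≤ ((1:ℝ)/2) ^ (α/2) := by
      have := Real.rpow_le_rpow_of_exponent_ge (x := (1:ℝ)/2) (by norm_num) (by norm_num)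
        (by linarith : α/2 ≤ 1)
      rwa [Real.rpow_one] at this
    exact h2.trans (Real.rpow_le_rpow (by norm_num) h1 (by positivity))
  have hS : (1:ℝ) ≤ ((t-s)/s) ^ (α/2) := by
    have h1 : (1:ℝ) ≤ (t-s)/s := by rw [le_div_iff₀ hs]; linarith
    calc (1:ℝ) = (1:ℝ) ^ (α/2) := (Real.one_rpow _).symm
      _ ≤ ((t-s)/s) ^ (α/2) := Real.rpow_le_rpow zero_le_one h1 (by positivity)
  have h2k : (1:ℝ) ≤ 2 ^ k := by
    have := Real.rpow_le_rpow_of_exponent_le (x := (2:ℝ)) one_le_two hk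
    · rwa [Real.rpow_zero] at this
  have habs : |t ^ (-k) * Real.exp (-(a/t)) - s ^ (-k) * Real.exp (-(a/s))|
      ≤ t ^ (-k) * Real.exp (-(a/t)) + s ^ (-k) * Real.exp (-(a/s)) := by
    have h1 : 0 ≤ t ^ (-k) * Real.exp (-(a/t)) := mul_nonneg htk0 (Real.exp_pos _).le
    have h2 : 0 ≤ s ^ (-k) * Real.exp (-(a/s)) := mul_nonneg hsk0 (Real.exp_pos _).le
    rw [abs_le]; constructor <;> linarith
  refine habs.trans ?_
  have hT : t ^ (-k) * Real.exp (-(a/t))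
      ≤ 2 * ((t-s)/t) ^ (α/2) * (t ^ (-k) * Real.exp (-(a/(2*t)))) := by
    have h1 : t ^ (-k) * Real.exp (-(a/t)) ≤ t ^ (-k) * Real.exp (-(a/(2*t))) :=
      mul_le_mul_of_nonneg_left hEt2 htk0
    have h2 : 0 ≤ t ^ (-k) * Real.exp (-(a/(2*t))) := mul_nonneg htk0 (Real.exp_pos _).le
    nlinarith
  have hSb : s ^ (-k) * Real.exp (-(a/s))
      ≤ ((t-s)/s) ^ (α/2) * (s ^ (-k) * Real.exp (-(a/(2*s)))) := by
    have h1 : s ^ (-k) * Real.exp (-(a/s)) ≤ s ^ (-k) * Real.exp (-(a/(2*s))) :=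
      mul_le_mul_of_nonneg_left hEs2 hsk0
    have h2 : 0 ≤ s ^ (-k) * Real.exp (-(a/(2*s))) := mul_nonneg hsk0 (Real.exp_pos _).le
    nlinarith
  have hsum : t ^ (-k) * Real.exp (-(a/t)) + s ^ (-k) * Real.exp (-(a/s))
      ≤ 2 * ((t-s)/t) ^ (α/2) * (t ^ (-k) * Real.exp (-(a/(2*t))))
        + ((t-s)/s) ^ (α/2) * (s ^ (-k) * Real.exp (-(a/(2*s)))) := add_le_add hT hSb
  refine hsum.trans ?_
  have hnn : 0 ≤ 2 * ((t-s)/t) ^ (α/2) * (t ^ (-k) * Real.exp (-(a/(2*t))))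
      + ((t-s)/s) ^ (α/2) * (s ^ (-k) * Real.exp (-(a/(2*s)))) := by
    have h1 : 0 ≤ ((t-s)/t) ^ (α/2) := Real.rpow_nonneg (by positivity) _
    have h2 : 0 ≤ ((t-s)/s) ^ (α/2) := Real.rpow_nonneg (by positivity) _
    have h3 : 0 ≤ t ^ (-k) * Real.exp (-(a/(2*t))) := mul_nonneg htk0 (Real.exp_pos _).le
    have h4 : 0 ≤ s ^ (-k) * Real.exp (-(a/(2*s))) := mul_nonneg hsk0 (Real.exp_pos _).le
    positivity
  nlinarith [h2k, hnn]


lemma hk_form (d : ℕ) (r : ℝ) (hr : 0 < r) (x : EuclideanSpace ℝ (Fin d)) :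
    heatKernel d r x
      = (4 * Real.pi) ^ (-((d:ℝ)/2)) * (r ^ (-((d:ℝ)/2)) * Real.exp (-((‖x‖^2/4)/r))) := by
  unfold heatKernel
  have h1 : -(d:ℝ)/2 = -((d:ℝ)/2) := by ring
  have h2 : -‖x‖^2/(4*r) = -((‖x‖^2/4)/r) := by field_simp
  rw [h1, h2, Real.mul_rpow (by positivity) hr.le, mul_assoc]

theorem stmt_7 (d : ℕ) (α T : ℝ) (hα0 : 0 < α) (hα1 : α < 1) (hT : 0 < T) :
    ∃ c : ℝ, 0 < c ∧ ∀ s t : ℝ, 0 < s → s < t → t ≤ T → ∀ x : EuclideanSpace ℝ (Fin d),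
      |heatKernel d t x - heatKernel d s x| ≤
        c * (t - s) ^ (α / 2) *
          (t ^ (-α / 2) * heatKernel d (2 * t) x + s ^ (-α / 2) * heatKernel d (2 * s) x) := by
  have hd0 : (0:ℝ) ≤ (d:ℝ) := Nat.cast_nonneg d
  refine ⟨((d:ℝ)+5) * 2 ^ ((d:ℝ)), by positivity, ?_⟩
  intro s t hs hst htT x
  have ht : 0 < t := hs.trans hst
  have hts : 0 < t - s := sub_pos.mpr hst
  have hk0 : (0:ℝ) ≤ (d:ℝ)/2 := by positivity
  have ha : (0:ℝ) ≤ ‖x‖^2/4 := by positivity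
  have hKpos : (0:ℝ) < (4*Real.pi) ^ (-((d:ℝ)/2)) := Real.rpow_pos_of_pos (by positivity) _
  have h2k1 : (2:ℝ) ^ ((d:ℝ)/2) * (2:ℝ) ^ (-((d:ℝ)/2)) = 1 := by
    rw [← Real.rpow_add (by norm_num : (0:ℝ) < 2)]; norm_num
  have h2kk : (2:ℝ) ^ ((d:ℝ)/2) * (2:ℝ) ^ ((d:ℝ)/2) = (2:ℝ) ^ ((d:ℝ)) := by
    rw [← Real.rpow_add (by norm_num : (0:ℝ) < 2)]; congr 1; ring
  have hp2t : (4*Real.pi) ^ (-((d:ℝ)/2)) * (t ^ (-((d:ℝ)/2)) * Real.exp (-((‖x‖^2/4)/(2*t))))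
      = 2 ^ ((d:ℝ)/2) * heatKernel d (2*t) x := by
    rw [hk_form d (2*t) (by positivity) x, Real.mul_rpow (by norm_num : (0:ℝ) ≤ 2) ht.le]
    linear_combination (-(4*Real.pi) ^ (-((d:ℝ)/2)) * (t ^ (-((d:ℝ)/2))
      * Real.exp (-((‖x‖^2/4)/(2*t))))) * h2k1
  have hp2s : (4*Real.pi) ^ (-((d:ℝ)/2)) * (s ^ (-((d:ℝ)/2)) * Real.exp (-((‖x‖^2/4)/(2*s))))
      = 2 ^ ((d:ℝ)/2) * heatKernel d (2*s) x := by
    rw [hk_form d (2*s) (by positivity) x, Real.mul_rpow (by norm_num : (0:ℝ) ≤ 2) hs.le]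
    linear_combination (-(4*Real.pi) ^ (-((d:ℝ)/2)) * (s ^ (-((d:ℝ)/2))
      * Real.exp (-((‖x‖^2/4)/(2*s))))) * h2k1
  have hp2t0 : 0 ≤ heatKernel d (2*t) x := by
    rw [hk_form d (2*t) (by positivity) x]; positivity
  have hp2s0 : 0 ≤ heatKernel d (2*s) x := by
    rw [hk_form d (2*s) (by positivity) x]; positivity
  have hexp : -α/2 = -(α/2) := by ring
  rw [hexp, hk_form d t ht x, hk_form d s hs x, ← mul_sub, abs_mul, abs_of_pos hKpos]
  have hRdef : (t-s) ^ (α/2) * t ^ (-(α/2)) = ((t-s)/t) ^ (α/2) := by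
    rw [Real.div_rpow hts.le ht.le, Real.rpow_neg ht.le]; ring
  have hSdef : (t-s) ^ (α/2) * s ^ (-(α/2)) = ((t-s)/s) ^ (α/2) := by
    rw [Real.div_rpow hts.le hs.le, Real.rpow_neg hs.le]; ring
  have hR0 : 0 ≤ ((t-s)/t) ^ (α/2) := Real.rpow_nonneg (by positivity) _
  have hS0 : 0 ≤ ((t-s)/s) ^ (α/2) := Real.rpow_nonneg (by positivity) _
  have h2d0 : (0:ℝ) ≤ 2 ^ ((d:ℝ)) := Real.rpow_nonneg (by norm_num) _
  rcases le_or_gt t (2*s) with hc | hc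
  · -- regime t ≤ 2s
    have hmain := case1 ((d:ℝ)/2) (‖x‖^2/4) s t α hk0 ha hs hst hc hα0 (by linarith)
    have step1 := mul_le_mul_of_nonneg_left hmain hKpos.le
    have step2 : (4*Real.pi) ^ (-((d:ℝ)/2)) * (((d:ℝ)/2+5) * 2 ^ ((d:ℝ)/2)
          * ((t-s)/t) ^ (α/2) * (t ^ (-((d:ℝ)/2)) * Real.exp (-((‖x‖^2/4)/(2*t)))))
        = ((d:ℝ)/2+5) * (2 ^ ((d:ℝ)/2) * 2 ^ ((d:ℝ)/2)) * ((t-s)/t) ^ (α/2)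
          * heatKernel d (2*t) x := by
      calc (4*Real.pi) ^ (-((d:ℝ)/2)) * (((d:ℝ)/2+5) * 2 ^ ((d:ℝ)/2)
            * ((t-s)/t) ^ (α/2) * (t ^ (-((d:ℝ)/2)) * Real.exp (-((‖x‖^2/4)/(2*t)))))
          = ((d:ℝ)/2+5) * 2 ^ ((d:ℝ)/2) * ((t-s)/t) ^ (α/2)
            * ((4*Real.pi) ^ (-((d:ℝ)/2)) * (t ^ (-((d:ℝ)/2))
              * Real.exp (-((‖x‖^2/4)/(2*t))))) := by ring
        _ = ((d:ℝ)/2+5) * 2 ^ ((d:ℝ)/2) * ((t-s)/t) ^ (α/2)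
            * (2 ^ ((d:ℝ)/2) * heatKernel d (2*t) x) := by rw [hp2t]
        _ = ((d:ℝ)/2+5) * (2 ^ ((d:ℝ)/2) * 2 ^ ((d:ℝ)/2)) * ((t-s)/t) ^ (α/2)
            * heatKernel d (2*t) x := by ring
    rw [step2, h2kk] at step1
    have hlast : 0 ≤ ((d:ℝ)+5) * 2 ^ ((d:ℝ))
        * ((t-s) ^ (α/2) * s ^ (-(α/2)) * heatKernel d (2*s) x) := by
      apply mul_nonneg (by positivity)
      exact mul_nonneg (mul_nonneg (Real.rpow_nonneg hts.le _) (Real.rpow_nonneg hs.le _)) hp2s0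
    have hRw : ((t-s)/t) ^ (α/2) = (t-s) ^ (α/2) * t ^ (-(α/2)) := hRdef.symm
    rw [hRw] at step1
    have hmono : 0 ≤ ((d:ℝ)) * 2 ^ ((d:ℝ)) * ((t-s) ^ (α/2) * t ^ (-(α/2))
        * heatKernel d (2*t) x) := by
      apply mul_nonneg (by positivity)
      exact mul_nonneg (mul_nonneg (Real.rpow_nonneg hts.le _) (Real.rpow_nonneg ht.le _)) hp2t0
    nlinarith [step1, hlast, hmono]
  · -- regime 2s < t
    have hmain := case2 ((d:ℝ)/2) (‖x‖^2/4) s t α hk0 ha hs hst hc hα0 (by linarith)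
    have step1 := mul_le_mul_of_nonneg_left hmain hKpos.le
    have step2 : (4*Real.pi) ^ (-((d:ℝ)/2)) * (2 ^ ((d:ℝ)/2)
          * (2 * ((t-s)/t) ^ (α/2) * (t ^ (-((d:ℝ)/2)) * Real.exp (-((‖x‖^2/4)/(2*t))))
            + ((t-s)/s) ^ (α/2) * (s ^ (-((d:ℝ)/2)) * Real.exp (-((‖x‖^2/4)/(2*s))))))
        = 2 ^ ((d:ℝ)) * (2 * ((t-s)/t) ^ (α/2) * heatKernel d (2*t) x
            + ((t-s)/s) ^ (α/2) * heatKernel d (2*s) x) := by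
      calc (4*Real.pi) ^ (-((d:ℝ)/2)) * (2 ^ ((d:ℝ)/2)
            * (2 * ((t-s)/t) ^ (α/2) * (t ^ (-((d:ℝ)/2)) * Real.exp (-((‖x‖^2/4)/(2*t))))
              + ((t-s)/s) ^ (α/2) * (s ^ (-((d:ℝ)/2)) * Real.exp (-((‖x‖^2/4)/(2*s))))))
          = 2 ^ ((d:ℝ)/2) * (2 * ((t-s)/t) ^ (α/2)
              * ((4*Real.pi) ^ (-((d:ℝ)/2)) * (t ^ (-((d:ℝ)/2))
                * Real.exp (-((‖x‖^2/4)/(2*t)))))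
            + ((t-s)/s) ^ (α/2) * ((4*Real.pi) ^ (-((d:ℝ)/2)) * (s ^ (-((d:ℝ)/2))
                * Real.exp (-((‖x‖^2/4)/(2*s)))))) := by ring
        _ = 2 ^ ((d:ℝ)/2) * (2 * ((t-s)/t) ^ (α/2) * (2 ^ ((d:ℝ)/2) * heatKernel d (2*t) x)
            + ((t-s)/s) ^ (α/2) * (2 ^ ((d:ℝ)/2) * heatKernel d (2*s) x)) := by
              rw [hp2t, hp2s]
        _ = (2 ^ ((d:ℝ)/2) * 2 ^ ((d:ℝ)/2)) * (2 * ((t-s)/t) ^ (α/2) * heatKernel d (2*t) x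
            + ((t-s)/s) ^ (α/2) * heatKernel d (2*s) x) := by ring
        _ = 2 ^ ((d:ℝ)) * (2 * ((t-s)/t) ^ (α/2) * heatKernel d (2*t) x
            + ((t-s)/s) ^ (α/2) * heatKernel d (2*s) x) := by rw [h2kk]
    rw [step2] at step1
    rw [← hRdef, ← hSdef] at step1
    have hm1 : 0 ≤ ((d:ℝ)) * 2 ^ ((d:ℝ)) * ((t-s) ^ (α/2) * t ^ (-(α/2))
        * heatKernel d (2*t) x) := by
      apply mul_nonneg (by positivity)
      exact mul_nonneg (mul_nonneg (Real.rpow_nonneg hts.le _) (Real.rpow_nonneg ht.le _)) hp2t0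
    have hm2 : 0 ≤ ((d:ℝ)) * 2 ^ ((d:ℝ)) * ((t-s) ^ (α/2) * s ^ (-(α/2))
        * heatKernel d (2*s) x) := by
      apply mul_nonneg (by positivity)
      exact mul_nonneg (mul_nonneg (Real.rpow_nonneg hts.le _) (Real.rpow_nonneg hs.le _)) hp2s0
    have hm3 : 0 ≤ 2 ^ ((d:ℝ)) * ((t-s) ^ (α/2) * t ^ (-(α/2)) * heatKernel d (2*t) x) := by
      apply mul_nonneg h2d0
      exact mul_nonneg (mul_nonneg (Real.rpow_nonneg hts.le _) (Real.rpow_nonneg ht.le _)) hp2t0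
    have hm4 : 0 ≤ 2 ^ ((d:ℝ)) * ((t-s) ^ (α/2) * s ^ (-(α/2)) * heatKernel d (2*s) x) := by
      apply mul_nonneg h2d0
      exact mul_nonneg (mul_nonneg (Real.rpow_nonneg hts.le _) (Real.rpow_nonneg hs.le _)) hp2s0
    nlinarith [step1, hm1, hm2, hm3, hm4]
end

section
/- Let α ∈ (0, 1) and T > 0. There exists a constant c > 0 (depending only on d, T, α) such that for all 0 < s < t ≤ T and all x ∈ ℝ^d: |∇p_t(x) − ∇p_s(x)| ≤ c · (t − s)^(α/2) · (t^(−(1+α)/2) · p_{2t}(x) + s^(−(1+α)/2) · p_{2s}(x)). -/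
open Real MeasureTheory

lemma aux_exp1 (u : ℝ) (hu : 0 ≤ u) : u * Real.exp (-(u^2)/8) ≤ 2 := by
  have h : u ≤ 2 * Real.exp (u^2/8) := by
    nlinarith [Real.add_one_le_exp (u^2/8), sq_nonneg (u-2)]
  have he : Real.exp (-(u^2)/8) = (Real.exp (u^2/8))⁻¹ := by
    rw [← Real.exp_neg]; ring_nf
  rw [he, mul_inv_le_iff₀ (Real.exp_pos _)]
  linarith

lemma aux_exp3 (u : ℝ) (hu : 0 ≤ u) : u^3 * Real.exp (-(u^2)/8) ≤ 125 := by
  have h2 : (1 + u^2/24) ≤ Real.exp (u^2/24) := by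
    have := Real.add_one_le_exp (u^2/24); linarith
  have hcube : Real.exp (u^2/8) = (Real.exp (u^2/24))^3 := by
    rw [← Real.exp_nat_mul]; norm_num; ring_nf
  have h : u^3 ≤ 125 * Real.exp (u^2/8) := by
    have hu5 : u ≤ 5 * (1 + u^2/24) := by nlinarith [sq_nonneg (u - 12/5)]
    have h5 : u^3 ≤ (5 * (1 + u^2/24))^3 := by
      apply pow_le_pow_left₀ hu hu5
    have : (5 * (1 + u^2/24))^3 ≤ 125 * (Real.exp (u^2/24))^3 := by
      have hb : (0:ℝ) ≤ 1 + u^2/24 := by positivity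
      have := pow_le_pow_left₀ hb h2 3
      nlinarith [this]
    rw [hcube]; nlinarith
  have he : Real.exp (-(u^2)/8) = (Real.exp (u^2/8))⁻¹ := by
    rw [← Real.exp_neg]; ring_nf
  rw [he, mul_inv_le_iff₀ (Real.exp_pos _)]
  linarith


-- n * e^{-n²/(8r)} ≤ 2 √r
lemma aux_n1' {r : ℝ} (hr : 0 < r) (n : ℝ) (hn : 0 ≤ n) :
    n * Real.exp (-(n^2)/(8*r)) ≤ 2 * Real.sqrt r := by
  have hsr : 0 < Real.sqrt r := Real.sqrt_pos.mpr hr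
  have h := aux_exp1 (n / Real.sqrt r) (by positivity)
  have hss : Real.sqrt r * Real.sqrt r = r := Real.mul_self_sqrt hr.le
  have harg : -((n / Real.sqrt r)^2)/8 = -(n^2)/(8*r) := by
    rw [div_pow, Real.sq_sqrt hr.le]
    field_simp
  rw [harg] at h
  calc n * Real.exp (-(n^2)/(8*r))
      = (n / Real.sqrt r * Real.exp (-(n^2)/(8*r))) * Real.sqrt r := by
        field_simp
    _ ≤ 2 * Real.sqrt r := by
        apply mul_le_mul_of_nonneg_right h hsr.le

lemma aux_n3' {r : ℝ} (hr : 0 < r) (n : ℝ) (hn : 0 ≤ n) :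
    n^3 * Real.exp (-(n^2)/(8*r)) ≤ 125 * (r * Real.sqrt r) := by
  have hsr : 0 < Real.sqrt r := Real.sqrt_pos.mpr hr
  have h := aux_exp3 (n / Real.sqrt r) (by positivity)
  have hss : Real.sqrt r * Real.sqrt r = r := Real.mul_self_sqrt hr.le
  have harg : -((n / Real.sqrt r)^2)/8 = -(n^2)/(8*r) := by
    rw [div_pow, Real.sq_sqrt hr.le]
    field_simp
  rw [harg] at h
  have key : (n / Real.sqrt r)^3 * (r * Real.sqrt r) = n^3 := by
    have h3 : Real.sqrt r ^ 3 = r * Real.sqrt r := by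
      rw [pow_succ, pow_two, hss]
    rw [div_pow, h3]
    field_simp
  calc n^3 * Real.exp (-(n^2)/(8*r))
      = ((n / Real.sqrt r)^3 * Real.exp (-(n^2)/(8*r))) * (r * Real.sqrt r) := by
        rw [mul_comm ((n / Real.sqrt r)^3) _, mul_assoc, key]; ring
    _ ≤ 125 * (r * Real.sqrt r) := by
        apply mul_le_mul_of_nonneg_right h (by positivity)

lemma hk_pos (d : ℕ) {t : ℝ} (ht : 0 < t) (x : EuclideanSpace ℝ (Fin d)) :
    0 < heatKernel d t x := by
  unfold heatKernel
  have : (0:ℝ) < 4 * Real.pi * t := by positivity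
  positivity

lemma hasDerivAt_hk (d : ℕ) (x : EuclideanSpace ℝ (Fin d)) {r : ℝ} (hr : 0 < r) :
    HasDerivAt (fun r => heatKernel d r x)
      (heatKernel d r x * ((-(d:ℝ)/2)/r + ‖x‖^2/(4*r^2))) r := by
  have h4 : (0:ℝ) < 4 * Real.pi * r := by positivity
  have hF : HasDerivAt (fun r : ℝ => (4 * Real.pi * r) ^ (-(d:ℝ)/2))
      ((4 * Real.pi) * (-(d:ℝ)/2) * (4 * Real.pi * r) ^ (-(d:ℝ)/2 - 1)) r := by
    have hlin : HasDerivAt (fun r : ℝ => 4 * Real.pi * r) (4 * Real.pi) r := by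
      simpa using (hasDerivAt_id r).const_mul (4 * Real.pi)
    exact hlin.rpow_const (Or.inl h4.ne')
  have hInner : HasDerivAt (fun r : ℝ => -‖x‖^2 / (4 * r)) (‖x‖^2 / (4 * r^2)) r := by
    have h1 : HasDerivAt (fun r : ℝ => r⁻¹) (-(r^2)⁻¹) r := hasDerivAt_inv hr.ne'
    have h2 := h1.const_mul (-‖x‖^2 / 4)
    have hfun : (fun r : ℝ => -‖x‖^2 / (4 * r)) = fun y => -‖x‖^2 / 4 * y⁻¹ := by
      funext y
      rw [← div_div, div_eq_mul_inv]
    rw [hfun]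
    refine h2.congr_deriv ?_
    ring
  have hG : HasDerivAt (fun r : ℝ => Real.exp (-‖x‖^2 / (4 * r)))
      (Real.exp (-‖x‖^2 / (4 * r)) * (‖x‖^2 / (4 * r^2))) r := by
    simpa [mul_comm] using hInner.exp
  have := hF.mul hG
  refine this.congr_deriv ?_
  unfold heatKernel
  have hsub : (4 * Real.pi * r) ^ (-(d:ℝ)/2 - 1)
      = (4 * Real.pi * r) ^ (-(d:ℝ)/2) / (4 * Real.pi * r) := by
    rw [Real.rpow_sub h4, Real.rpow_one]
  rw [hsub]
  field_simp

lemma hasDerivAt_hkGrad (d : ℕ) (x : EuclideanSpace ℝ (Fin d)) {r : ℝ} (hr : 0 < r) :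
    HasDerivAt (fun r => heatKernelGrad d r x)
      ((heatKernel d r x * ((1 + (d:ℝ)/2) - ‖x‖^2/(4*r)) / (2*r^2)) • x) r := by
  have hf := (hasDerivAt_hk d x hr).neg
  have hg : HasDerivAt (fun r : ℝ => 2 * r) 2 r := by
    simpa using (hasDerivAt_id r).const_mul (2:ℝ)
  have hne : (2:ℝ) * r ≠ 0 := by positivity
  have hdiv := hf.div hg hne
  have h := hdiv.smul_const x
  unfold heatKernelGrad
  refine h.congr_deriv (congrArg (· • x) ?_)
  simp only [Pi.neg_apply]
  field_simp
  ring

lemma pow_shift (d : ℕ) {t : ℝ} (ht : 0 < t) :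
    (4*Real.pi*t) ^ (-(d:ℝ)/2) = 2^((d:ℝ)/2) * (4*Real.pi*(2*t)) ^ (-(d:ℝ)/2) := by
  have h1 : ((2:ℝ)*(4*Real.pi*t)) ^ (-(d:ℝ)/2)
      = 2 ^ (-(d:ℝ)/2) * (4*Real.pi*t) ^ (-(d:ℝ)/2) :=
    Real.mul_rpow (by norm_num) (by positivity)
  have h2 : (2:ℝ)^((d:ℝ)/2) * 2 ^ (-(d:ℝ)/2) = 1 := by
    rw [← Real.rpow_add two_pos, show (d:ℝ)/2 + -(d:ℝ)/2 = 0 by ring, Real.rpow_zero]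
  calc (4*Real.pi*t) ^ (-(d:ℝ)/2)
      = (2^((d:ℝ)/2) * 2 ^ (-(d:ℝ)/2)) * (4*Real.pi*t) ^ (-(d:ℝ)/2) := by rw [h2, one_mul]
    _ = 2^((d:ℝ)/2) * (((2:ℝ)*(4*Real.pi*t)) ^ (-(d:ℝ)/2)) := by rw [h1]; ring
    _ = 2^((d:ℝ)/2) * (4*Real.pi*(2*t)) ^ (-(d:ℝ)/2) := by
        rw [show (2:ℝ)*(4*Real.pi*t) = 4*Real.pi*(2*t) by ring]

lemma hk_split (d : ℕ) {t : ℝ} (ht : 0 < t) (x : EuclideanSpace ℝ (Fin d)) :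
    heatKernel d t x
      = 2^((d:ℝ)/2) * heatKernel d (2*t) x * Real.exp (-‖x‖^2/(8*t)) := by
  unfold heatKernel
  rw [pow_shift d ht]
  have h2 : Real.exp (-‖x‖^2/(4*t))
      = Real.exp (-‖x‖^2/(4*(2*t))) * Real.exp (-‖x‖^2/(8*t)) := by
    rw [← Real.exp_add]
    congr 1
    field_simp
    ring
  rw [h2]
  ring

lemma hk_double_mono (d : ℕ) {r t : ℝ} (hr : 0 < r) (hrt : r ≤ t) (htr : t ≤ 2*r)
    (x : EuclideanSpace ℝ (Fin d)) :
    heatKernel d (2*r) x ≤ 2^((d:ℝ)/2) * heatKernel d (2*t) x := by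
  have ht : 0 < t := lt_of_lt_of_le hr hrt
  unfold heatKernel
  have hexp : Real.exp (-‖x‖^2/(4*(2*r))) ≤ Real.exp (-‖x‖^2/(4*(2*t))) := by
    apply Real.exp_le_exp.mpr
    rw [neg_div, neg_div, neg_le_neg_iff]
    gcongr
  have hpow : (4*Real.pi*(2*r)) ^ (-(d:ℝ)/2) ≤ 2^((d:ℝ)/2) * (4*Real.pi*(2*t)) ^ (-(d:ℝ)/2) := by
    rw [← pow_shift d ht]
    apply Real.rpow_le_rpow_of_nonpos (by positivity) (by nlinarith [Real.pi_pos])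
    have : (0:ℝ) ≤ (d:ℝ) := by positivity
    linarith
  have hp1 : (0:ℝ) ≤ (4*Real.pi*(2*r)) ^ (-(d:ℝ)/2) := by positivity
  calc (4*Real.pi*(2*r)) ^ (-(d:ℝ)/2) * Real.exp (-‖x‖^2/(4*(2*r)))
      ≤ (2^((d:ℝ)/2) * (4*Real.pi*(2*t)) ^ (-(d:ℝ)/2)) * Real.exp (-‖x‖^2/(4*(2*t))) := by
        apply mul_le_mul hpow hexp (Real.exp_pos _).le (by positivity)
    _ = 2^((d:ℝ)/2) * ((4*Real.pi*(2*t)) ^ (-(d:ℝ)/2) * Real.exp (-‖x‖^2/(4*(2*t)))) := by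
        ring

lemma deriv_bound_r (d : ℕ) (x : EuclideanSpace ℝ (Fin d)) {r : ℝ} (hr : 0 < r) :
    ‖(heatKernel d r x * ((1 + (d:ℝ)/2) - ‖x‖^2/(4*r)) / (2*r^2)) • x‖
      ≤ 2^((d:ℝ)/2) * ((d:ℝ)+17) / (r * Real.sqrt r) * heatKernel d (2*r) x := by
  have hn : (0:ℝ) ≤ ‖x‖ := norm_nonneg x
  have hq : 0 < Real.sqrt r := Real.sqrt_pos.mpr hr
  have hss : Real.sqrt r * Real.sqrt r = r := Real.mul_self_sqrt hr.le
  have hkpos := hk_pos d hr x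
  have h2t : 0 < 2*r := by linarith
  have hk2pos := hk_pos d h2t x
  rw [norm_smul, Real.norm_eq_abs]
  have habs : |heatKernel d r x * ((1 + (d:ℝ)/2) - ‖x‖^2/(4*r)) / (2*r^2)|
      ≤ heatKernel d r x * ((1 + (d:ℝ)/2) + ‖x‖^2/(4*r)) / (2*r^2) := by
    rw [abs_div, abs_mul, abs_of_pos hkpos, abs_of_pos (show (0:ℝ) < 2*r^2 by positivity)]
    have h1 : (0:ℝ) ≤ (d:ℝ)/2 := by positivity
    have h2 : (0:ℝ) ≤ ‖x‖^2/(4*r) := by positivity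
    have : |(1 + (d:ℝ)/2) - ‖x‖^2/(4*r)| ≤ (1 + (d:ℝ)/2) + ‖x‖^2/(4*r) := by
      rw [abs_le]; constructor <;> linarith
    gcongr
  have key := mul_le_mul_of_nonneg_right habs hn
  refine le_trans key ?_
  rw [hk_split d hr x]
  have hkey : Real.exp (-‖x‖^2/(8*r)) * (((1 + (d:ℝ)/2) + ‖x‖^2/(4*r)) * ‖x‖)
      ≤ 2*((d:ℝ)+17) * Real.sqrt r := by
    have b1 := aux_n1' hr ‖x‖ hn
    have b3 := aux_n3' hr ‖x‖ hn
    have e1 : Real.exp (-‖x‖^2/(8*r)) * (((1 + (d:ℝ)/2) + ‖x‖^2/(4*r)) * ‖x‖)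
        = (1 + (d:ℝ)/2) * (‖x‖ * Real.exp (-(‖x‖^2)/(8*r)))
          + (‖x‖^3 * Real.exp (-(‖x‖^2)/(8*r))) / (4*r) := by
      field_simp
    rw [e1]
    have L1 : (1 + (d:ℝ)/2) * (‖x‖ * Real.exp (-(‖x‖^2)/(8*r)))
        ≤ (1 + (d:ℝ)/2) * (2 * Real.sqrt r) := by
      apply mul_le_mul_of_nonneg_left b1 (by positivity)
    have L3 : (‖x‖^3 * Real.exp (-(‖x‖^2)/(8*r))) / (4*r)
        ≤ (125 * (r * Real.sqrt r)) / (4*r) := by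
      gcongr
    have L3' : (125 * (r * Real.sqrt r)) / (4*r) = 125/4 * Real.sqrt r := by
      field_simp
    rw [L3'] at L3
    have hd0 : (0:ℝ) ≤ (d:ℝ) := by positivity
    nlinarith [hq.le]
  -- assemble
  calc 2^((d:ℝ)/2) * heatKernel d (2*r) x * Real.exp (-‖x‖^2/(8*r))
        * ((1 + (d:ℝ)/2) + ‖x‖^2/(4*r)) / (2*r^2) * ‖x‖
      = (2^((d:ℝ)/2) * heatKernel d (2*r) x)
        * (Real.exp (-‖x‖^2/(8*r)) * (((1 + (d:ℝ)/2) + ‖x‖^2/(4*r)) * ‖x‖)) / (2*r^2) := by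
        ring
    _ ≤ (2^((d:ℝ)/2) * heatKernel d (2*r) x) * (2*((d:ℝ)+17) * Real.sqrt r) / (2*r^2) := by
        gcongr
    _ = 2^((d:ℝ)/2) * ((d:ℝ)+17) / (r * Real.sqrt r) * heatKernel d (2*r) x := by
        field_simp
        linear_combination hss

lemma deriv_bound_interval (d : ℕ) (x : EuclideanSpace ℝ (Fin d)) {s t r : ℝ}
    (hs : 0 < s) (hst : s ≤ t) (ht2 : t ≤ 2*s) (hr1 : s ≤ r) (hr2 : r ≤ t) :
    ‖(heatKernel d r x * ((1 + (d:ℝ)/2) - ‖x‖^2/(4*r)) / (2*r^2)) • x‖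
      ≤ ((d:ℝ)+17) * 2^((d:ℝ)+2) / (t * Real.sqrt t) * heatKernel d (2*t) x := by
  have hr0 : 0 < r := lt_of_lt_of_le hs hr1
  have ht0 : 0 < t := lt_of_lt_of_le hs hst
  have htr : t ≤ 2*r := by linarith
  have hqt : 0 < Real.sqrt t := Real.sqrt_pos.mpr ht0
  have hqr : 0 < Real.sqrt r := Real.sqrt_pos.mpr hr0
  have hk2t := hk_pos d (show (0:ℝ) < 2*t by linarith) x
  have hk2r := hk_pos d (show (0:ℝ) < 2*r by linarith) x
  refine le_trans (deriv_bound_r d x hr0) ?_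
  have hmono := hk_double_mono d hr0 hr2 htr x
  -- 1/(r√r) ≤ 3/(t√t)
  have hsrt : (2/3) * Real.sqrt t ≤ Real.sqrt r := by
    have h49 : Real.sqrt ((4/9)*t) ≤ Real.sqrt r := Real.sqrt_le_sqrt (by linarith)
    have : Real.sqrt ((4/9)*t) = (2/3) * Real.sqrt t := by
      rw [Real.sqrt_mul (by norm_num) t, show (4/9:ℝ) = (2/3)^2 by norm_num,
        Real.sqrt_sq (by norm_num)]
    linarith [this ▸ h49]
  have hrs : 1/(r*Real.sqrt r) ≤ 3/(t*Real.sqrt t) := by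
    rw [div_le_div_iff₀ (by positivity) (by positivity)]
    nlinarith [mul_le_mul (show t/2 ≤ r by linarith) hsrt (by positivity) hr0.le]
  have h2d : (2:ℝ)^((d:ℝ)/2) * 2^((d:ℝ)/2) = 2^((d:ℝ)) := by
    rw [← Real.rpow_add two_pos, show (d:ℝ)/2+(d:ℝ)/2 = (d:ℝ) by ring]
  have h4 : (2:ℝ)^((d:ℝ)+2) = 2^((d:ℝ)) * 4 := by
    rw [Real.rpow_add two_pos]
    norm_num
  have h2dpos : (0:ℝ) < 2^((d:ℝ)/2) := Real.rpow_pos_of_pos two_pos _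
  calc 2^((d:ℝ)/2) * ((d:ℝ)+17) / (r * Real.sqrt r) * heatKernel d (2*r) x
      = (2^((d:ℝ)/2) * ((d:ℝ)+17) * (1/(r * Real.sqrt r))) * heatKernel d (2*r) x := by
        ring
    _ ≤ (2^((d:ℝ)/2) * ((d:ℝ)+17) * (3/(t * Real.sqrt t)))
        * (2^((d:ℝ)/2) * heatKernel d (2*t) x) := by
        apply mul_le_mul _ hmono hk2r.le (by positivity)
        apply mul_le_mul_of_nonneg_left hrs (by positivity)
    _ = (2^((d:ℝ)/2) * 2^((d:ℝ)/2)) * (3 * ((d:ℝ)+17) / (t * Real.sqrt t))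
        * heatKernel d (2*t) x := by ring
    _ = 2^((d:ℝ)) * (3 * ((d:ℝ)+17) / (t * Real.sqrt t)) * heatKernel d (2*t) x := by
        rw [h2d]
    _ ≤ ((d:ℝ)+17) * 2^((d:ℝ)+2) / (t * Real.sqrt t) * heatKernel d (2*t) x := by
        rw [h4]
        have hd0 : (0:ℝ) ≤ (d:ℝ) := by positivity
        have h2dp : (0:ℝ) < 2^((d:ℝ)) := Real.rpow_pos_of_pos two_pos _
        have : 2^((d:ℝ)) * (3 * ((d:ℝ)+17) / (t * Real.sqrt t))
            ≤ ((d:ℝ)+17) * (2^((d:ℝ)) * 4) / (t * Real.sqrt t) := by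
          rw [show (2:ℝ)^((d:ℝ)) * (3 * ((d:ℝ)+17) / (t * Real.sqrt t))
            = (2^((d:ℝ)) * (3 * ((d:ℝ)+17))) / (t * Real.sqrt t) by ring]
          apply div_le_div_of_nonneg_right ?_ (by positivity)
          nlinarith
        apply mul_le_mul_of_nonneg_right this hk2t.le

lemma grad_norm_bound (d : ℕ) (x : EuclideanSpace ℝ (Fin d)) {t : ℝ} (ht : 0 < t) :
    ‖heatKernelGrad d t x‖ ≤ 2^((d:ℝ)/2) / Real.sqrt t * heatKernel d (2*t) x := by
  have hn : (0:ℝ) ≤ ‖x‖ := norm_nonneg x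
  have hq : 0 < Real.sqrt t := Real.sqrt_pos.mpr ht
  have hss : Real.sqrt t * Real.sqrt t = t := Real.mul_self_sqrt ht.le
  have hk2t := hk_pos d (show (0:ℝ) < 2*t by linarith) x
  unfold heatKernelGrad
  rw [norm_smul, Real.norm_eq_abs, abs_div, abs_neg, abs_of_pos (hk_pos d ht x),
    abs_of_pos (show (0:ℝ) < 2*t by linarith)]
  rw [hk_split d ht x]
  have b1 := aux_n1' ht ‖x‖ hn
  calc 2^((d:ℝ)/2) * heatKernel d (2*t) x * Real.exp (-‖x‖^2/(8*t)) / (2*t) * ‖x‖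
      = (2^((d:ℝ)/2) * heatKernel d (2*t) x) * (‖x‖ * Real.exp (-(‖x‖^2)/(8*t))) / (2*t) := by
        ring
    _ ≤ (2^((d:ℝ)/2) * heatKernel d (2*t) x) * (2 * Real.sqrt t) / (2*t) := by
        gcongr
    _ = 2^((d:ℝ)/2) / Real.sqrt t * heatKernel d (2*t) x := by
        field_simp
        linear_combination hss

theorem stmt_8 (d : ℕ) (α T : ℝ) (hα0 : 0 < α) (hα1 : α < 1) (hT : 0 < T) :
    ∃ c : ℝ, 0 < c ∧ ∀ s t : ℝ, 0 < s → s < t → t ≤ T → ∀ x : EuclideanSpace ℝ (Fin d),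
      ‖heatKernelGrad d t x - heatKernelGrad d s x‖ ≤
        c * (t - s) ^ (α / 2) *
          (t ^ (-(1 + α) / 2) * heatKernel d (2 * t) x +
            s ^ (-(1 + α) / 2) * heatKernel d (2 * s) x) := by
  have h2dpos : (0:ℝ) < 2^((d:ℝ)+2) := Real.rpow_pos_of_pos two_pos _
  refine ⟨((d:ℝ)+17) * 2^((d:ℝ)+2), by positivity, ?_⟩
  intro s t hs hst htT x
  have ht0 : 0 < t := lt_trans hs hst
  have hts : 0 < t - s := sub_pos.mpr hst
  have hqt : 0 < Real.sqrt t := Real.sqrt_pos.mpr ht0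
  have hqs : 0 < Real.sqrt s := Real.sqrt_pos.mpr hs
  have hk2t := hk_pos d (show (0:ℝ) < 2*t by linarith) x
  have hk2s := hk_pos d (show (0:ℝ) < 2*s by linarith) x
  have htpow : (0:ℝ) < t ^ (-(1 + α) / 2) := Real.rpow_pos_of_pos ht0 _
  have hspow : (0:ℝ) < s ^ (-(1 + α) / 2) := Real.rpow_pos_of_pos hs _
  have htspow : (0:ℝ) < (t - s) ^ (α / 2) := Real.rpow_pos_of_pos hts _
  -- t * √t = t ^ (3/2)
  have ht32 : t * Real.sqrt t = t ^ ((3:ℝ)/2) := by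
    rw [show ((3:ℝ)/2) = 1 + 1/2 by norm_num, Real.rpow_add ht0, Real.rpow_one,
      Real.sqrt_eq_rpow]
  by_cases hcase : t ≤ 2*s
  · -- mean value theorem case
    have hMVT : ‖heatKernelGrad d t x - heatKernelGrad d s x‖
        ≤ (((d:ℝ)+17) * 2^((d:ℝ)+2) / (t * Real.sqrt t) * heatKernel d (2*t) x) * ‖t - s‖ := by
      apply Convex.norm_image_sub_le_of_norm_hasDerivWithin_le
        (f := fun r => heatKernelGrad d r x)
        (f' := fun r => (heatKernel d r x * ((1 + (d:ℝ)/2) - ‖x‖^2/(4*r)) / (2*r^2)) • x)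
        (s := Set.Icc s t)
      · intro r hr
        exact (hasDerivAt_hkGrad d x (lt_of_lt_of_le hs hr.1)).hasDerivWithinAt
      · intro r hr
        exact deriv_bound_interval d x hs hst.le hcase hr.1 hr.2
      · exact convex_Icc s t
      · exact Set.left_mem_Icc.mpr hst.le
      · exact Set.right_mem_Icc.mpr hst.le
    rw [Real.norm_eq_abs, abs_of_pos hts] at hMVT
    refine le_trans hMVT ?_
    -- key exponent estimate
    have hkey : (t - s) / (t * Real.sqrt t) ≤ (t - s) ^ (α/2) * t ^ (-(1 + α) / 2) := by
      have e1 : t - s = (t - s) ^ (α/2) * (t - s) ^ (1 - α/2) := by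
        rw [← Real.rpow_add hts, show α/2 + (1 - α/2) = 1 by ring, Real.rpow_one]
      have e2 : (t - s) ^ (1 - α/2) ≤ t ^ (1 - α/2) :=
        Real.rpow_le_rpow hts.le (by linarith) (by linarith)
      have e3 : t ^ (1 - α/2) / t ^ ((3:ℝ)/2) = t ^ (-(1 + α) / 2) := by
        rw [← Real.rpow_sub ht0, show 1 - α/2 - (3:ℝ)/2 = -(1 + α) / 2 by ring]
      calc (t - s) / (t * Real.sqrt t)
          = (t - s) ^ (α/2) * ((t - s) ^ (1 - α/2) / t ^ ((3:ℝ)/2)) := by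
            rw [ht32]
            linear_combination (1 / t ^ ((3:ℝ)/2)) * e1
          _ ≤ (t - s) ^ (α/2) * (t ^ (1 - α/2) / t ^ ((3:ℝ)/2)) :=
            mul_le_mul_of_nonneg_left
              (div_le_div_of_nonneg_right e2 (by positivity)) htspow.le
          _ = (t - s) ^ (α/2) * t ^ (-(1 + α) / 2) := by rw [e3]
    calc ((d:ℝ)+17) * 2^((d:ℝ)+2) / (t * Real.sqrt t) * heatKernel d (2*t) x * (t - s)
        = ((d:ℝ)+17) * 2^((d:ℝ)+2) * heatKernel d (2*t) x * ((t - s) / (t * Real.sqrt t)) := by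
          ring
      _ ≤ ((d:ℝ)+17) * 2^((d:ℝ)+2) * heatKernel d (2*t) x
          * ((t - s) ^ (α/2) * t ^ (-(1 + α) / 2)) := by
          gcongr
      _ = ((d:ℝ)+17) * 2^((d:ℝ)+2) * (t - s) ^ (α/2) * (t ^ (-(1 + α) / 2)
          * heatKernel d (2*t) x) := by ring
      _ ≤ ((d:ℝ)+17) * 2^((d:ℝ)+2) * (t - s) ^ (α/2) * (t ^ (-(1 + α) / 2)
          * heatKernel d (2*t) x + s ^ (-(1 + α) / 2) * heatKernel d (2*s) x) := by
          rw [mul_add]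
          have hY : 0 ≤ ((d:ℝ)+17) * 2^((d:ℝ)+2) * (t - s)^(α/2)
              * (s ^ (-(1 + α) / 2) * heatKernel d (2*s) x) :=
            mul_nonneg (by positivity) (mul_nonneg hspow.le hk2s.le)
          linarith
      _ = ((d:ℝ)+17) * 2^((d:ℝ)+2) * (t - s) ^ (α/2) * (t ^ (-(1 + α) / 2)
          * heatKernel d (2*t) x + s ^ (-(1 + α) / 2) * heatKernel d (2*s) x) := by ring
  · -- triangle inequality case
    push_neg at hcase
    have hts2 : t ≤ 2*(t - s) := by linarith
    have hsts : s ≤ t - s := by linarith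
    have h1t : 1 / Real.sqrt t ≤ 2 * ((t - s) ^ (α/2) * t ^ (-(1 + α) / 2)) := by
      have e0 : 1 / Real.sqrt t = t ^ (α/2) * t ^ (-(1 + α) / 2) := by
        rw [← Real.rpow_add ht0, show α/2 + -(1 + α)/2 = -(1/2) by ring,
          Real.rpow_neg ht0.le, Real.sqrt_eq_rpow, one_div]
      have e1 : t ^ (α/2) ≤ 2 * (t - s) ^ (α/2) := by
        calc t ^ (α/2) ≤ (2*(t - s)) ^ (α/2) := Real.rpow_le_rpow ht0.le hts2 (by linarith)
          _ = 2 ^ (α/2) * (t - s) ^ (α/2) := Real.mul_rpow (by norm_num) hts.le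
          _ ≤ 2 * (t - s) ^ (α/2) := by
              have : (2:ℝ) ^ (α/2) ≤ 2 ^ (1:ℝ) :=
                Real.rpow_le_rpow_of_exponent_le one_le_two (by linarith)
              rw [Real.rpow_one] at this
              apply mul_le_mul_of_nonneg_right this htspow.le
      rw [e0]
      calc t ^ (α/2) * t ^ (-(1 + α) / 2) ≤ (2 * (t - s) ^ (α/2)) * t ^ (-(1 + α) / 2) :=
            mul_le_mul_of_nonneg_right e1 htpow.le
        _ = 2 * ((t - s) ^ (α/2) * t ^ (-(1 + α) / 2)) := by ring
    have h1s : 1 / Real.sqrt s ≤ (t - s) ^ (α/2) * s ^ (-(1 + α) / 2) := by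
      have e0 : 1 / Real.sqrt s = s ^ (α/2) * s ^ (-(1 + α) / 2) := by
        rw [← Real.rpow_add hs, show α/2 + -(1 + α)/2 = -(1/2) by ring,
          Real.rpow_neg hs.le, Real.sqrt_eq_rpow, one_div]
      have e1 : s ^ (α/2) ≤ (t - s) ^ (α/2) := Real.rpow_le_rpow hs.le hsts (by linarith)
      rw [e0]
      exact mul_le_mul_of_nonneg_right e1 hspow.le
    have hhalf : (2:ℝ)^((d:ℝ)/2) ≤ 2^((d:ℝ)+2) := by
      apply Real.rpow_le_rpow_of_exponent_le one_le_two
      have : (0:ℝ) ≤ (d:ℝ) := by positivity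
      linarith
    have hD2pos : (0:ℝ) < 2^((d:ℝ)/2) := Real.rpow_pos_of_pos two_pos _
    calc ‖heatKernelGrad d t x - heatKernelGrad d s x‖
        ≤ ‖heatKernelGrad d t x‖ + ‖heatKernelGrad d s x‖ := norm_sub_le _ _
      _ ≤ 2^((d:ℝ)/2) / Real.sqrt t * heatKernel d (2*t) x
          + 2^((d:ℝ)/2) / Real.sqrt s * heatKernel d (2*s) x := by
          gcongr
          · exact grad_norm_bound d x ht0
          · exact grad_norm_bound d x hs
      _ ≤ 2^((d:ℝ)/2) * (2 * ((t - s) ^ (α/2) * t ^ (-(1 + α) / 2))) * heatKernel d (2*t) x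
          + 2^((d:ℝ)/2) * ((t - s) ^ (α/2) * s ^ (-(1 + α) / 2)) * heatKernel d (2*s) x := by
          gcongr
          · rw [div_eq_mul_one_div]
            exact mul_le_mul_of_nonneg_left h1t hD2pos.le
          · rw [div_eq_mul_one_div]
            exact mul_le_mul_of_nonneg_left h1s hD2pos.le
      _ ≤ ((d:ℝ)+17) * 2^((d:ℝ)+2) * (t - s) ^ (α/2) *
          (t ^ (-(1 + α) / 2) * heatKernel d (2*t) x + s ^ (-(1 + α) / 2)
            * heatKernel d (2*s) x) := by
          have ht_term : 2^((d:ℝ)/2) * (2 * ((t - s) ^ (α/2) * t ^ (-(1 + α) / 2)))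
              * heatKernel d (2*t) x
              ≤ ((d:ℝ)+17) * 2^((d:ℝ)+2) * (t - s) ^ (α/2)
                * (t ^ (-(1 + α) / 2) * heatKernel d (2*t) x) := by
            have hd0 : (0:ℝ) ≤ (d:ℝ) := by positivity
            have base : 2*(2:ℝ)^((d:ℝ)/2) ≤ ((d:ℝ)+17)*2^((d:ℝ)+2) := by
              nlinarith [hhalf, h2dpos]
            calc 2^((d:ℝ)/2) * (2 * ((t - s) ^ (α/2) * t ^ (-(1 + α) / 2)))
                  * heatKernel d (2*t) x
                = (2*(2:ℝ)^((d:ℝ)/2)) * ((t - s) ^ (α/2)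
                    * (t ^ (-(1 + α) / 2) * heatKernel d (2*t) x)) := by ring
              _ ≤ (((d:ℝ)+17)*2^((d:ℝ)+2)) * ((t - s) ^ (α/2)
                    * (t ^ (-(1 + α) / 2) * heatKernel d (2*t) x)) :=
                  mul_le_mul_of_nonneg_right base
                    (mul_nonneg htspow.le (mul_nonneg htpow.le hk2t.le))
              _ = ((d:ℝ)+17) * 2^((d:ℝ)+2) * (t - s) ^ (α/2)
                    * (t ^ (-(1 + α) / 2) * heatKernel d (2*t) x) := by ring
          have hs_term : 2^((d:ℝ)/2) * ((t - s) ^ (α/2) * s ^ (-(1 + α) / 2))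
              * heatKernel d (2*s) x
              ≤ ((d:ℝ)+17) * 2^((d:ℝ)+2) * (t - s) ^ (α/2)
                * (s ^ (-(1 + α) / 2) * heatKernel d (2*s) x) := by
            have hd0 : (0:ℝ) ≤ (d:ℝ) := by positivity
            have base : (2:ℝ)^((d:ℝ)/2) ≤ ((d:ℝ)+17)*2^((d:ℝ)+2) := by
              nlinarith [hhalf, h2dpos]
            calc 2^((d:ℝ)/2) * ((t - s) ^ (α/2) * s ^ (-(1 + α) / 2))
                  * heatKernel d (2*s) x
                = (2:ℝ)^((d:ℝ)/2) * ((t - s) ^ (α/2)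
                    * (s ^ (-(1 + α) / 2) * heatKernel d (2*s) x)) := by ring
              _ ≤ (((d:ℝ)+17)*2^((d:ℝ)+2)) * ((t - s) ^ (α/2)
                    * (s ^ (-(1 + α) / 2) * heatKernel d (2*s) x)) :=
                  mul_le_mul_of_nonneg_right base
                    (mul_nonneg htspow.le (mul_nonneg hspow.le hk2s.le))
              _ = ((d:ℝ)+17) * 2^((d:ℝ)+2) * (t - s) ^ (α/2)
                    * (s ^ (-(1 + α) / 2) * heatKernel d (2*s) x) := by ring
          calc _ ≤ _ := add_le_add ht_term hs_term
            _ = ((d:ℝ)+17) * 2^((d:ℝ)+2) * (t - s) ^ (α/2) *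
              (t ^ (-(1 + α) / 2) * heatKernel d (2*t) x + s ^ (-(1 + α) / 2)
                * heatKernel d (2*s) x) := by ring
end

section
/- Let ε ∈ (0, T], let X be an ℝ^d-valued random variable whose law has density ℓ with respect to Lebesgue measure, let Z be an ℝ^d-valued Gaussian random variable with mean 0 and covariance matrix 2ε·I_d, independent of X, and let h : ℝ^d → ℝ^d be Borel measurable with sup_x |h(x)| ≤ C·ε. Set Y := X + h(X) + Z. Then there exists a constant c ≥ 1 (depending only on d, T, C) such that for every nonnegative Borel measurable φ : ℝ^d × ℝ^d → [0, ∞]: E[φ(X, Y)] ≤ c · ∫∫_{ℝ^d × ℝ^d} φ(x, y) · ℓ(x) · p_{2ε}(x − y) dx dy. -/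
open MeasureTheory ProbabilityTheory Real ENNReal

lemma hk_meas (d : ℕ) (t : ℝ) : Measurable (heatKernel d t) := by
  unfold heatKernel; fun_prop

lemma hk_key (d : ℕ) (T C ε : ℝ) (hε : 0 < ε) (hεT : ε ≤ T) (hC : 0 ≤ C)
    (u v : EuclideanSpace ℝ (Fin d)) (hv : ‖v‖ ≤ C * ε) :
    heatKernel d ε (u - v) ≤
      (2 ^ ((d : ℝ) / 2) * Real.exp (C ^ 2 * T / 4)) * heatKernel d (2 * ε) u := by
  have hπ : (0:ℝ) < Real.pi := Real.pi_pos
  have h2e : (4 * Real.pi * (2 * ε) : ℝ) = 2 * (4 * Real.pi * ε) := by ring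
  have h1 : (4 * Real.pi * ε) ^ (-(d : ℝ) / 2)
      = 2 ^ ((d : ℝ) / 2) * (4 * Real.pi * (2 * ε)) ^ (-(d : ℝ) / 2) := by
    conv_rhs => rw [h2e, Real.mul_rpow (by norm_num) (by positivity)]
    rw [← mul_assoc, ← Real.rpow_add (by norm_num : (0:ℝ) < 2),
      show (d:ℝ)/2 + -(d:ℝ)/2 = 0 by ring, Real.rpow_zero, one_mul]
  have h2 : Real.exp (-‖u - v‖ ^ 2 / (4 * ε)) ≤
      Real.exp (C ^ 2 * T / 4) * Real.exp (-‖u‖ ^ 2 / (4 * (2 * ε))) := by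
    rw [← Real.exp_add, Real.exp_le_exp]
    have hu : ‖u‖ ≤ ‖u - v‖ + ‖v‖ := by
      calc ‖u‖ = ‖(u - v) + v‖ := by rw [sub_add_cancel]
        _ ≤ ‖u - v‖ + ‖v‖ := norm_add_le _ _
    have hv0 : (0:ℝ) ≤ ‖v‖ := norm_nonneg _
    have hw0 : (0:ℝ) ≤ ‖u - v‖ := norm_nonneg _
    have hu2 : ‖u‖ ^ 2 ≤ (‖u - v‖ + ‖v‖) ^ 2 := pow_le_pow_left₀ (norm_nonneg u) hu 2
    have H : -‖u - v‖ ^ 2 / (4 * ε) - (C ^ 2 * T / 4 + -‖u‖ ^ 2 / (4 * (2 * ε))) ≤ 0 := by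
      have e : -‖u - v‖ ^ 2 / (4 * ε) - (C ^ 2 * T / 4 + -‖u‖ ^ 2 / (4 * (2 * ε)))
          = (‖u‖ ^ 2 - 2 * ‖u - v‖ ^ 2 - 2 * (C ^ 2) * T * ε) / (8 * ε) := by
        field_simp; ring
      rw [e]
      refine div_nonpos_iff.2 (Or.inr ⟨?_, by positivity⟩)
      nlinarith [mul_le_mul hv hv hv0 (by positivity : (0:ℝ) ≤ C * ε),
        sq_nonneg (‖u - v‖ - ‖v‖),
        mul_le_mul_of_nonneg_left hεT (by positivity : (0:ℝ) ≤ C ^ 2 * ε)]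
    linarith
  calc heatKernel d ε (u - v)
      = (4 * Real.pi * ε) ^ (-(d : ℝ) / 2) * Real.exp (-‖u - v‖ ^ 2 / (4 * ε)) := rfl
    _ ≤ (2 ^ ((d : ℝ) / 2) * (4 * Real.pi * (2 * ε)) ^ (-(d : ℝ) / 2)) *
        (Real.exp (C ^ 2 * T / 4) * Real.exp (-‖u‖ ^ 2 / (4 * (2 * ε)))) := by
        rw [h1]; exact mul_le_mul_of_nonneg_left h2 (by positivity)
    _ = (2 ^ ((d : ℝ) / 2) * Real.exp (C ^ 2 * T / 4)) * heatKernel d (2 * ε) u := by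
        unfold heatKernel; ring

theorem stmt_10 (d : ℕ) {Ω : Type*} [MeasurableSpace Ω] (P : Measure Ω)
    [IsProbabilityMeasure P] (T C : ℝ) (hT : 0 < T) (hC : 0 < C) :
    ∃ c : ℝ, 1 ≤ c ∧
      ∀ (ε : ℝ), 0 < ε → ε ≤ T →
      ∀ (X Z : Ω → EuclideanSpace ℝ (Fin d)), Measurable X → Measurable Z →
      ∀ ℓ : EuclideanSpace ℝ (Fin d) → ℝ, Measurable ℓ → (∀ x, 0 ≤ ℓ x) →
      -- the law of `X` has density `ℓ` w.r.t. Lebesgue measure: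
      P.map X = volume.withDensity (fun x => ENNReal.ofReal (ℓ x)) →
      -- `Z` is Gaussian with mean `0` and covariance matrix `2ε I_d`,
      -- i.e. its law has density `p_ε` w.r.t. Lebesgue measure:
      P.map Z = volume.withDensity (fun z => ENNReal.ofReal (heatKernel d ε z)) →
      IndepFun X Z P →
      ∀ h : EuclideanSpace ℝ (Fin d) → EuclideanSpace ℝ (Fin d), Measurable h →
      (∀ x, ‖h x‖ ≤ C * ε) →
      ∀ φ : EuclideanSpace ℝ (Fin d) × EuclideanSpace ℝ (Fin d) → ℝ≥0∞, Measurable φ →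
        ∫⁻ ω, φ (X ω, X ω + h (X ω) + Z ω) ∂P ≤
          ENNReal.ofReal c *
            ∫⁻ x : EuclideanSpace ℝ (Fin d), ∫⁻ y : EuclideanSpace ℝ (Fin d),
              φ (x, y) * ENNReal.ofReal (ℓ x) *
                ENNReal.ofReal (heatKernel d (2 * ε) (x - y)) := by
  set c : ℝ := 2 ^ ((d : ℝ) / 2) * Real.exp (C ^ 2 * T / 4) with hc
  have hc1 : 1 ≤ c := by
    have h1 : (1:ℝ) ≤ 2 ^ ((d : ℝ) / 2) :=
      Real.one_le_rpow (by norm_num) (by positivity)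
    have h2 : (1:ℝ) ≤ Real.exp (C ^ 2 * T / 4) :=
      Real.one_le_exp (by positivity)
    nlinarith
  refine ⟨c, hc1, ?_⟩
  intro ε hε hεT X Z hX hZ ℓ hℓ hℓ0 hmX hmZ hind h hh hhb φ hφ
  haveI : IsProbabilityMeasure (P.map X) := Measure.isProbabilityMeasure_map hX.aemeasurable
  haveI : IsProbabilityMeasure (P.map Z) := Measure.isProbabilityMeasure_map hZ.aemeasurable
  have hprod : P.map (fun ω => (X ω, Z ω)) = (P.map X).prod (P.map Z) :=
    (indepFun_iff_map_prod_eq_prod_map_map hX.aemeasurable hZ.aemeasurable).mp hind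
  have hg : Measurable (fun p : EuclideanSpace ℝ (Fin d) × EuclideanSpace ℝ (Fin d) => φ (p.1, p.1 + h p.1 + p.2)) :=
    hφ.comp (measurable_fst.prodMk
      ((measurable_fst.add (hh.comp measurable_fst)).add measurable_snd))
  -- pointwise bound
  have hpt : ∀ x y : EuclideanSpace ℝ (Fin d), ENNReal.ofReal (heatKernel d ε (y - (x + h x))) ≤
      ENNReal.ofReal c * ENNReal.ofReal (heatKernel d (2 * ε) (x - y)) := by
    intro x y
    rw [← ENNReal.ofReal_mul (by positivity)]
    apply ENNReal.ofReal_le_ofReal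
    have hrev : heatKernel d (2 * ε) (x - y) = heatKernel d (2 * ε) (y - x) := by
      unfold heatKernel; rw [norm_sub_rev]
    rw [hrev]
    have := hk_key d T C ε hε hεT hC.le (y - x) (h x) (hhb x)
    have hsub : y - (x + h x) = (y - x) - h x := by abel
    rw [hsub]
    exact this
  have hmeas1 : Measurable fun x : EuclideanSpace ℝ (Fin d) =>
      ∫⁻ y, ENNReal.ofReal (heatKernel d (2 * ε) (x - y)) * φ (x, y) :=
    Measurable.lintegral_prod_right
      ((((hk_meas d (2 * ε)).comp (measurable_fst.sub measurable_snd)).ennreal_ofReal).mul hφ)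
  calc ∫⁻ ω, φ (X ω, X ω + h (X ω) + Z ω) ∂P
      = ∫⁻ p : EuclideanSpace ℝ (Fin d) × EuclideanSpace ℝ (Fin d),
          φ (p.1, p.1 + h p.1 + p.2) ∂(P.map fun ω => (X ω, Z ω)) :=
        (lintegral_map hg (hX.prodMk hZ)).symm
    _ = ∫⁻ x, ∫⁻ z, φ (x, x + h x + z) ∂(P.map Z) ∂(P.map X) := by
        rw [hprod, lintegral_prod _ hg.aemeasurable]
    _ = ∫⁻ x, (∫⁻ z, ENNReal.ofReal (heatKernel d ε z) * φ (x, x + h x + z)) ∂(P.map X) := by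
        refine lintegral_congr fun x => ?_
        have hφx : Measurable fun z : EuclideanSpace ℝ (Fin d) => φ (x, x + h x + z) :=
          hφ.comp (by fun_prop)
        rw [hmZ, lintegral_withDensity_eq_lintegral_mul volume ((hk_meas d ε).ennreal_ofReal) hφx]
        rfl
    _ = ∫⁻ x, (∫⁻ y, ENNReal.ofReal (heatKernel d ε (y - (x + h x))) * φ (x, y)) ∂(P.map X) := by
        refine lintegral_congr fun x => ?_
        rw [← lintegral_add_left_eq_self
          (fun y => ENNReal.ofReal (heatKernel d ε (y - (x + h x))) * φ (x, y)) (x + h x)]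
        simp [add_sub_cancel_left]
    _ ≤ ∫⁻ x, (∫⁻ y, ENNReal.ofReal c *
          (ENNReal.ofReal (heatKernel d (2 * ε) (x - y)) * φ (x, y))) ∂(P.map X) := by
        refine lintegral_mono fun x => lintegral_mono fun y => ?_
        rw [← mul_assoc]
        exact mul_le_mul_left (hpt x y) _
    _ = ENNReal.ofReal c * ∫⁻ x, (∫⁻ y,
          ENNReal.ofReal (heatKernel d (2 * ε) (x - y)) * φ (x, y)) ∂(P.map X) := by
        rw [← lintegral_const_mul' _ _ ENNReal.ofReal_ne_top]
        refine lintegral_congr fun x => ?_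
        rw [← lintegral_const_mul' _ _ ENNReal.ofReal_ne_top]
    _ = ENNReal.ofReal c * ∫⁻ x, ENNReal.ofReal (ℓ x) * ∫⁻ y,
          ENNReal.ofReal (heatKernel d (2 * ε) (x - y)) * φ (x, y) := by
        congr 1
        rw [hmX, lintegral_withDensity_eq_lintegral_mul volume hℓ.ennreal_ofReal hmeas1]
        rfl
    _ = ENNReal.ofReal c * ∫⁻ x, ∫⁻ y, φ (x, y) * ENNReal.ofReal (ℓ x) *
          ENNReal.ofReal (heatKernel d (2 * ε) (x - y)) := by
        congr 1
        refine lintegral_congr fun x => ?_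
        rw [← lintegral_const_mul' _ _ ENNReal.ofReal_ne_top]
        refine lintegral_congr fun y => ?_
        ring
end

section
/- Let α ∈ (0, 1), p ∈ [1, ∞) and T > 0. Let ℓ : ℝ^d → [0, ∞) be measurable with M := ∫_{ℝ^d} (1 + |y|^p) ℓ(y) dy < ∞. There exists a constant c > 0 (depending only on d, T, α, p) such that for all 0 < s < t ≤ T: ∫_{ℝ^d} (1 + |x|^p) · |P_t ℓ(x) − P_s ℓ(x)| dx ≤ c · M · (t − s)^(α/2) · s^(−α/2). -/
open Real MeasureTheory

/-- The heat semigroup `P_t f (x) = ∫ p_t(x - y) f(y) dy`. -/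
noncomputable def heatSemigroup (d : ℕ) (t : ℝ) (f : EuclideanSpace ℝ (Fin d) → ℝ)
    (x : EuclideanSpace ℝ (Fin d)) : ℝ :=
  ∫ y : EuclideanSpace ℝ (Fin d), heatKernel d t (x - y) * f y


lemma gauss_int (d : ℕ) (b : ℝ) (hb : 0 < b) :
    Integrable (fun z : EuclideanSpace ℝ (Fin d) => Real.exp (-b * ‖z‖^2)) := by
  have h := GaussianFourier.integrable_cexp_neg_mul_sq_norm_add (b := (b:ℂ))
    (by simpa using hb) 0 (0 : EuclideanSpace ℝ (Fin d))
  refine h.norm.congr ?_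
  filter_upwards with z
  rw [Complex.norm_exp]
  norm_num
  left
  norm_cast

lemma rpow_le_exp' (r q : ℝ) (hr : 0 ≤ r) (hq : 0 ≤ q) : r ^ q ≤ Real.exp (q * r) := by
  rcases le_or_gt r 1 with h | h
  · calc r ^ q ≤ 1 := Real.rpow_le_one hr h hq
    _ ≤ Real.exp (q * r) := by
        rw [← Real.exp_zero]; exact Real.exp_le_exp.2 (by positivity)
  · rw [Real.rpow_def_of_pos (by linarith)]
    exact Real.exp_le_exp.2 (by nlinarith [Real.log_le_sub_one_of_pos (by linarith : (0:ℝ) < r)])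

lemma poly_gauss_int (d : ℕ) (p A B c : ℝ) (hp : 0 ≤ p) (hA : 0 ≤ A) (hB : 0 ≤ B)
    (hc : 0 < c) :
    Integrable (fun z : EuclideanSpace ℝ (Fin d) =>
      (1 + ‖z‖ ^ p) * (A + B * ‖z‖ ^ 2) * Real.exp (-(c * ‖z‖ ^ 2))) := by
  have hcont : Continuous (fun z : EuclideanSpace ℝ (Fin d) =>
      (1 + ‖z‖ ^ p) * (A + B * ‖z‖ ^ 2) * Real.exp (-(c * ‖z‖ ^ 2))) := by
    have h1 : Continuous fun z : EuclideanSpace ℝ (Fin d) => ‖z‖ ^ p :=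
      continuous_norm.rpow_const (fun z => Or.inr hp)
    continuity
  refine Integrable.mono' (((gauss_int d (c/2) (by linarith)).const_mul
    (2 * (A + B) * Real.exp ((p+2)^2/(2*c))))) hcont.aestronglyMeasurable ?_
  filter_upwards with z
  set r := ‖z‖ with hr
  have hr0 : 0 ≤ r := norm_nonneg z
  have h1 : 1 + r ^ p ≤ 2 * Real.exp (p * r) := by
    have := rpow_le_exp' r p hr0 hp
    have h2 : (1:ℝ) ≤ Real.exp (p * r) := by
      rw [← Real.exp_zero]; exact Real.exp_le_exp.2 (by positivity)
    linarith
  have h2 : A + B * r ^ 2 ≤ (A + B) * Real.exp (2 * r) := by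
    have hsq : r ^ 2 ≤ Real.exp (2 * r) := by
      have := rpow_le_exp' r 2 hr0 (by norm_num)
      rwa [Real.rpow_two] at this
    have he1 : (1:ℝ) ≤ Real.exp (2 * r) := by
      rw [← Real.exp_zero]; exact Real.exp_le_exp.2 (by positivity)
    nlinarith
  have h3 : (p + 2) * r - c * r ^ 2 ≤ (p+2)^2/(2*c) - c/2 * r ^ 2 := by
    have key : ((p + 2) * r - c * r ^ 2 + c/2 * r^2) ≤ (p+2)^2/(2*c) := by
      rw [le_div_iff₀ (by positivity : (0:ℝ) < 2*c)]
      nlinarith [sq_nonneg (c*r - (p+2))]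
    linarith
  have hnorm : |(1 + r ^ p) * (A + B * r ^ 2) * Real.exp (-(c * r ^ 2))|
      = (1 + r ^ p) * (A + B * r ^ 2) * Real.exp (-(c * r ^ 2)) := by
    apply abs_of_nonneg; positivity
  rw [Real.norm_eq_abs, hnorm]
  calc (1 + r ^ p) * (A + B * r ^ 2) * Real.exp (-(c * r ^ 2))
      ≤ (2 * Real.exp (p * r)) * ((A + B) * Real.exp (2 * r)) * Real.exp (-(c * r ^ 2)) := by
        apply mul_le_mul (mul_le_mul h1 h2 (by positivity) (by positivity)) le_rfl
          (by positivity) (by positivity)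
    _ = 2 * (A + B) * Real.exp ((p + 2) * r - c * r ^ 2) := by
        rw [show (p + 2) * r - c * r ^ 2 = p * r + 2 * r + -(c * r ^ 2) by ring, Real.exp_add, Real.exp_add]; ring
    _ ≤ 2 * (A + B) * Real.exp ((p+2)^2/(2*c) - c/2 * r ^ 2) := by
        have := Real.exp_le_exp.2 h3
        nlinarith [Real.exp_pos ((p + 2) * r - c * r ^ 2)]
    _ = 2 * (A + B) * Real.exp ((p+2)^2/(2*c)) * Real.exp (-(c/2) * r ^ 2) := by
        rw [show (p+2)^2/(2*c) - c/2 * r ^ 2 = (p+2)^2/(2*c) + (-(c/2) * r^2) by ring, Real.exp_add]; ring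

noncomputable def wt (d : ℕ) (p : ℝ) (x : EuclideanSpace ℝ (Fin d)) : ℝ := 1 + ‖x‖ ^ p

noncomputable def Theta (d : ℕ) (u : ℝ) (x : EuclideanSpace ℝ (Fin d)) : ℝ :=
  (((d:ℝ)/2 + 1) + 1/(4*u) * ‖x‖ ^ 2) *
    ((4 * Real.pi * u) ^ (-(d : ℝ)/2) * Real.exp (-(1/(8*u) * ‖x‖ ^ 2)))

noncomputable def Xi (d : ℕ) (p u : ℝ) (x : EuclideanSpace ℝ (Fin d)) : ℝ :=
  wt d p x * Theta d u x

noncomputable def Psi (d : ℕ) (p : ℝ) (z : EuclideanSpace ℝ (Fin d)) : ℝ :=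
  (1 + ‖z‖ ^ p) * (((d:ℝ)/2 + 1) + (1/4) * ‖z‖ ^ 2) * Real.exp (-(1/8 * ‖z‖ ^ 2))

lemma wt_nonneg (d : ℕ) (p : ℝ) (hp : 0 ≤ p) (x : EuclideanSpace ℝ (Fin d)) : 0 ≤ wt d p x := by
  have : (0:ℝ) ≤ ‖x‖ ^ p := Real.rpow_nonneg (norm_nonneg x) p
  simp [wt]; positivity

lemma wt_cont (d : ℕ) (p : ℝ) (hp : 0 ≤ p) : Continuous (wt d p) :=
  continuous_const.add (continuous_norm.rpow_const (fun z => Or.inr hp))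

lemma Psi_integrable (d : ℕ) (p : ℝ) (hp : 0 ≤ p) : Integrable (Psi d p) :=
  poly_gauss_int d p ((d:ℝ)/2 + 1) (1/4) (1/8) hp (by positivity) (by norm_num) (by norm_num)


lemma Xi_integrable (d : ℕ) (p u : ℝ) (hp : 0 ≤ p) (hu : 0 < u) : Integrable (Xi d p u) := by
  have h := (poly_gauss_int d p ((d:ℝ)/2 + 1) (1/(4*u)) (1/(8*u)) hp (by positivity)
    (by positivity) (by positivity)).const_mul ((4 * Real.pi * u) ^ (-(d : ℝ)/2))
  refine h.congr (Filter.Eventually.of_forall fun x => ?_)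
  unfold Xi Theta wt
  ring

lemma heatKernel_nonneg (d : ℕ) (u : ℝ) (hu : 0 < u) (x : EuclideanSpace ℝ (Fin d)) : 0 ≤ heatKernel d u x := by
  unfold heatKernel
  have h : (0:ℝ) ≤ (4 * Real.pi * u) ^ (-(d : ℝ)/2) :=
    Real.rpow_nonneg (by positivity) _
  positivity

lemma heatKernel_le (d : ℕ) (u : ℝ) (hu : 0 < u) (x : EuclideanSpace ℝ (Fin d)) :
    heatKernel d u x ≤ (4 * Real.pi * u) ^ (-(d : ℝ)/2) := by
  unfold heatKernel
  have h : (0:ℝ) ≤ (4 * Real.pi * u) ^ (-(d : ℝ)/2) :=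
    Real.rpow_nonneg (by positivity) _
  have he : Real.exp (-‖x‖ ^ 2 / (4 * u)) ≤ 1 := by
    rw [Real.exp_le_one_iff]
    have : (0:ℝ) ≤ ‖x‖^2 / (4*u) := by positivity
    linarith [neg_div (4*u) (‖x‖^2)]
  nlinarith [Real.exp_pos (-‖x‖ ^ 2 / (4 * u))]

lemma heatKernel_cont (d : ℕ) (u : ℝ) : Continuous (fun x : EuclideanSpace ℝ (Fin d) => heatKernel d u x) := by
  unfold heatKernel
  exact continuous_const.mul (((continuous_norm.pow 2).neg.div_const _).rexp)

lemma wt_heatKernel_le_Xi (d : ℕ) (p u : ℝ) (hp : 0 ≤ p) (hu : 0 < u) (x : EuclideanSpace ℝ (Fin d)) :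
    wt d p x * heatKernel d u x ≤ Xi d p u x := by
  unfold Xi Theta heatKernel
  have hw : 0 ≤ wt d p x := wt_nonneg d p hp x
  have hr : (0:ℝ) ≤ (4 * Real.pi * u) ^ (-(d : ℝ)/2) := Real.rpow_nonneg (by positivity) _
  have hkey : Real.exp (-‖x‖ ^ 2 / (4 * u)) ≤
      (((d:ℝ)/2 + 1) + 1/(4*u) * ‖x‖ ^ 2) * Real.exp (-(1/(8*u) * ‖x‖ ^ 2)) := by
    have he : Real.exp (-‖x‖ ^ 2 / (4 * u)) ≤ Real.exp (-(1/(8*u) * ‖x‖ ^ 2)) := by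
      apply Real.exp_le_exp.2
      rw [neg_div, neg_le_neg_iff, div_mul_eq_mul_div,
        div_le_div_iff₀ (by positivity : (0:ℝ) < 8*u) (by positivity : (0:ℝ) < 4*u)]
      nlinarith [sq_nonneg ‖x‖, hu]
    have hone : (1:ℝ) ≤ ((d:ℝ)/2 + 1) + 1/(4*u) * ‖x‖ ^ 2 := by
      have h1 : (0:ℝ) ≤ (d:ℝ)/2 := by positivity
      have h2 : (0:ℝ) ≤ 1/(4*u) * ‖x‖ ^ 2 := by positivity
      linarith
    nlinarith [Real.exp_pos (-(1/(8*u) * ‖x‖ ^ 2))]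
  calc wt d p x * ((4 * Real.pi * u) ^ (-(d : ℝ)/2) * Real.exp (-‖x‖ ^ 2 / (4 * u)))
      ≤ wt d p x * ((4 * Real.pi * u) ^ (-(d : ℝ)/2) *
        ((((d:ℝ)/2 + 1) + 1/(4*u) * ‖x‖ ^ 2) * Real.exp (-(1/(8*u) * ‖x‖ ^ 2)))) := by
        apply mul_le_mul_of_nonneg_left (mul_le_mul_of_nonneg_left hkey hr) hw
    _ = wt d p x * ((((d:ℝ)/2 + 1) + 1/(4*u) * ‖x‖ ^ 2) *
        ((4 * Real.pi * u) ^ (-(d : ℝ)/2) * Real.exp (-(1/(8*u) * ‖x‖ ^ 2)))) := by ring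

lemma heatKernel_hasDerivAt (d : ℕ) (x : EuclideanSpace ℝ (Fin d)) (u : ℝ) (hu : 0 < u) :
    HasDerivAt (fun v => heatKernel d v x)
      ((-((d:ℝ)/2)/u + ‖x‖^2/(4*u^2)) * heatKernel d u x) u := by
  have h4πu : 0 < 4 * Real.pi * u := by positivity
  set n : ℝ := -(d : ℝ) / 2 with hn
  -- derivative of v ↦ (4πv)^n
  have h1 : HasDerivAt (fun v : ℝ => (4 * Real.pi * v) ^ n)
      (n * (4 * Real.pi * u) ^ (n - 1) * (4 * Real.pi)) u := by
    have hinner : HasDerivAt (fun v : ℝ => 4 * Real.pi * v) (4 * Real.pi) u := by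
      simpa using (hasDerivAt_id u).const_mul (4 * Real.pi)
    exact (Real.hasDerivAt_rpow_const (Or.inl h4πu.ne')).comp u hinner
  -- derivative of v ↦ exp(-‖x‖²/(4v))
  have h2 : HasDerivAt (fun v : ℝ => Real.exp (-‖x‖ ^ 2 / (4 * v)))
      (Real.exp (-‖x‖ ^ 2 / (4 * u)) * (‖x‖ ^ 2 / (4 * u ^ 2))) u := by
    have hinv : HasDerivAt (fun v : ℝ => (-‖x‖ ^ 2 / 4) * v⁻¹)
        ((-‖x‖ ^ 2 / 4) * (-(u ^ 2)⁻¹)) u := (hasDerivAt_inv hu.ne').const_mul _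
    have heq : (fun v : ℝ => Real.exp (-‖x‖ ^ 2 / (4 * v)))
        = fun v : ℝ => Real.exp ((-‖x‖ ^ 2 / 4) * v⁻¹) := by
      funext v; congr 1; ring
    rw [heq]
    have := hinv.exp
    convert this using 2
    · ring
    · ring
  have := h1.mul h2
  refine this.congr_deriv ?_
  unfold heatKernel
  rw [hn]
  have hpow : (4 * Real.pi * u) ^ (n - 1) = (4 * Real.pi * u) ^ n / (4 * Real.pi * u) := by
    rw [Real.rpow_sub h4πu, Real.rpow_one]
  rw [hpow]
  field_simp
  rw [hn]
  ring

lemma heatKernel_diff_le (d : ℕ) (s t : ℝ) (hs : 0 < s) (hst : s < t) (ht2 : t ≤ 2*s)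
    (x : EuclideanSpace ℝ (Fin d)) :
    |heatKernel d t x - heatKernel d s x| ≤ (t - s)/s * Theta d s x := by
  set f : ℝ → ℝ := fun v => heatKernel d v x
  set C : ℝ := (1/s) * Theta d s x with hC
  have hderiv : ∀ u ∈ Set.Icc s t, HasDerivWithinAt f
      ((-((d:ℝ)/2)/u + ‖x‖^2/(4*u^2)) * heatKernel d u x) (Set.Icc s t) u := by
    intro u hu
    exact (heatKernel_hasDerivAt d x u (lt_of_lt_of_le hs hu.1)).hasDerivWithinAt
  have hbound : ∀ u ∈ Set.Icc s t,
      ‖(-((d:ℝ)/2)/u + ‖x‖^2/(4*u^2)) * heatKernel d u x‖ ≤ C := by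
    intro u hu
    obtain ⟨hu1, hu2⟩ := hu
    have hu0 : 0 < u := lt_of_lt_of_le hs hu1
    have hu2s : u ≤ 2*s := le_trans hu2 ht2
    have hk_nonneg : 0 ≤ heatKernel d u x := by
      unfold heatKernel
      have : (0:ℝ) ≤ (4*Real.pi*u) ^ (-(d:ℝ)/2) := Real.rpow_nonneg (by positivity) _
      positivity
    have hk_le : heatKernel d u x ≤
        (4 * Real.pi * s) ^ (-(d : ℝ)/2) * Real.exp (-(1/(8*s) * ‖x‖ ^ 2)) := by
      unfold heatKernel
      have h1 : (4 * Real.pi * u) ^ (-(d : ℝ)/2) ≤ (4 * Real.pi * s) ^ (-(d : ℝ)/2) := by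
        apply Real.rpow_le_rpow_of_nonpos (by positivity)
        · nlinarith [Real.pi_pos]
        · have : (0:ℝ) ≤ (d:ℝ) := Nat.cast_nonneg d
          linarith [div_nonneg this (by norm_num : (0:ℝ) ≤ 2)]
      have h2 : Real.exp (-‖x‖ ^ 2 / (4 * u)) ≤ Real.exp (-(1/(8*s) * ‖x‖ ^ 2)) := by
        apply Real.exp_le_exp.2
        rw [neg_div, neg_le_neg_iff, div_mul_eq_mul_div,
          div_le_div_iff₀ (by positivity : (0:ℝ) < 8*s) (by positivity : (0:ℝ) < 4*u)]
        nlinarith [sq_nonneg ‖x‖]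
      have he : (0:ℝ) < Real.exp (-‖x‖ ^ 2 / (4 * u)) := Real.exp_pos _
      have h0 : (0:ℝ) ≤ (4 * Real.pi * u) ^ (-(d:ℝ)/2) := Real.rpow_nonneg (by positivity) _
      calc (4 * Real.pi * u) ^ (-(d:ℝ)/2) * Real.exp (-‖x‖ ^ 2 / (4 * u))
          ≤ (4 * Real.pi * s) ^ (-(d:ℝ)/2) * Real.exp (-‖x‖ ^ 2 / (4 * u)) :=
            mul_le_mul_of_nonneg_right h1 he.le
        _ ≤ (4 * Real.pi * s) ^ (-(d:ℝ)/2) * Real.exp (-(1/(8*s) * ‖x‖ ^ 2)) :=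
            mul_le_mul_of_nonneg_left h2 (Real.rpow_nonneg (by positivity) _)
    have hcoef : |(-((d:ℝ)/2)/u + ‖x‖^2/(4*u^2))| ≤ (1/s) * (((d:ℝ)/2 + 1) + 1/(4*s) * ‖x‖ ^ 2) := by
      have h1 : |(-((d:ℝ)/2)/u + ‖x‖^2/(4*u^2))| ≤ ((d:ℝ)/2)/u + ‖x‖^2/(4*u^2) := by
        have := abs_add_le (-((d:ℝ)/2)/u) (‖x‖^2/(4*u^2))
        have e1 : |(-((d:ℝ)/2)/u)| = ((d:ℝ)/2)/u := by
          rw [abs_div, abs_neg, abs_of_nonneg (by positivity : (0:ℝ) ≤ (d:ℝ)/2),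
            abs_of_pos hu0]
        have e2 : |‖x‖^2/(4*u^2)| = ‖x‖^2/(4*u^2) := abs_of_nonneg (by positivity)
        calc |(-((d:ℝ)/2)/u + ‖x‖^2/(4*u^2))| ≤ |(-((d:ℝ)/2)/u)| + |‖x‖^2/(4*u^2)| := this
          _ = ((d:ℝ)/2)/u + ‖x‖^2/(4*u^2) := by rw [e1, e2]
      have h2 : ((d:ℝ)/2)/u ≤ (1/s) * ((d:ℝ)/2 + 1) := by
        have : ((d:ℝ)/2)/u ≤ ((d:ℝ)/2)/s := by
          apply div_le_div_of_nonneg_left (by positivity) hs hu1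
        calc ((d:ℝ)/2)/u ≤ ((d:ℝ)/2)/s := this
          _ ≤ (1/s) * ((d:ℝ)/2 + 1) := by
              rw [div_eq_mul_inv, one_div, mul_comm]
              have : (0:ℝ) < s⁻¹ := by positivity
              nlinarith
      have h3 : ‖x‖^2/(4*u^2) ≤ (1/s) * (1/(4*s) * ‖x‖ ^ 2) := by
        have hsu : s^2 ≤ u^2 := by nlinarith
        have e : (1/s) * (1/(4*s) * ‖x‖ ^ 2) = ‖x‖^2/(s*(4*s)) := by
          rw [← mul_assoc, div_mul_div_comm, one_mul, one_div_mul_eq_div]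
        rw [e]
        apply div_le_div_of_nonneg_left (by positivity) (by positivity)
        nlinarith
      linarith
    rw [hC]
    unfold Theta
    rw [Real.norm_eq_abs, abs_mul]
    have e3 : |heatKernel d u x| = heatKernel d u x := abs_of_nonneg hk_nonneg
    rw [e3]
    calc |(-((d:ℝ)/2)/u + ‖x‖^2/(4*u^2))| * heatKernel d u x
        ≤ ((1/s) * (((d:ℝ)/2 + 1) + 1/(4*s) * ‖x‖ ^ 2)) *
          ((4 * Real.pi * s) ^ (-(d : ℝ)/2) * Real.exp (-(1/(8*s) * ‖x‖ ^ 2))) := by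
          apply mul_le_mul hcoef hk_le hk_nonneg (by positivity)
      _ = (1/s) * ((((d:ℝ)/2 + 1) + 1/(4*s) * ‖x‖ ^ 2) *
          ((4 * Real.pi * s) ^ (-(d : ℝ)/2) * Real.exp (-(1/(8*s) * ‖x‖ ^ 2)))) := by ring
  have := Convex.norm_image_sub_le_of_norm_hasDerivWithin_le hderiv hbound
    (convex_Icc s t) (Set.left_mem_Icc.2 hst.le) (Set.right_mem_Icc.2 hst.le)
  rw [Real.norm_eq_abs, Real.norm_eq_abs, abs_of_pos (by linarith : (0:ℝ) < t - s)] at this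
  calc |f t - f s| ≤ C * (t - s) := this
    _ = (t - s)/s * Theta d s x := by rw [hC]; ring

lemma Xi_integral_le (d : ℕ) (p T : ℝ) (hp : 0 ≤ p) (hT : 0 < T) (u : ℝ) (hu : 0 < u)
    (huT : u ≤ T) :
    ∫ x, Xi d p u x ≤ (1 + T^(p/2)) * (4 * Real.pi) ^ (-(d:ℝ)/2) * ∫ z : EuclideanSpace ℝ (Fin d), Psi d p z := by
  have hsq : (0:ℝ) < Real.sqrt u := Real.sqrt_pos.2 hu
  have hcomp := MeasureTheory.Measure.integral_comp_smul (volume : Measure (EuclideanSpace ℝ (Fin d)))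
    (Xi d p u) (Real.sqrt u)
  rw [finrank_euclideanSpace_fin] at hcomp
  -- rewrite Xi (√u • z)
  have hXi_smul : ∀ z : EuclideanSpace ℝ (Fin d), Xi d p u (Real.sqrt u • z) =
      (4 * Real.pi * u) ^ (-(d:ℝ)/2) *
        ((1 + (Real.sqrt u)^p * ‖z‖ ^ p) * (((d:ℝ)/2 + 1) + (1/4) * ‖z‖ ^ 2) *
          Real.exp (-(1/8 * ‖z‖ ^ 2))) := by
    intro z
    have hnorm : ‖Real.sqrt u • z‖ = Real.sqrt u * ‖z‖ := by
      rw [norm_smul, Real.norm_eq_abs, abs_of_pos hsq]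
    unfold Xi wt Theta
    rw [hnorm, Real.mul_rpow hsq.le (norm_nonneg z), mul_pow, Real.sq_sqrt hu.le]
    have e1 : 1/(4*u) * (u * ‖z‖^2) = (1/4) * ‖z‖^2 := by field_simp
    have e2 : 1/(8*u) * (u * ‖z‖^2) = 1/8 * ‖z‖^2 := by field_simp
    rw [e1, e2]
    ring
  -- the scaled integral
  have hscale : ∫ x, Xi d p u x = (Real.sqrt u)^d * ∫ z : EuclideanSpace ℝ (Fin d), Xi d p u (Real.sqrt u • z) := by
    rw [hcomp]
    rw [abs_of_pos (by positivity), smul_eq_mul]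
    rw [← mul_assoc, mul_inv_cancel₀ (by positivity), one_mul]
  rw [hscale]
  -- pull out constants
  have e3 : (Real.sqrt u)^d * (4 * Real.pi * u) ^ (-(d:ℝ)/2) = (4 * Real.pi) ^ (-(d:ℝ)/2) := by
    rw [Real.mul_rpow (by positivity) hu.le]
    have e4 : (Real.sqrt u)^d = u ^ ((d:ℝ)/2) := by
      rw [Real.sqrt_eq_rpow, ← Real.rpow_natCast (u ^ (1/2:ℝ)) d, ← Real.rpow_mul hu.le]
      norm_num
      congr 1
      ring
    rw [e4, mul_comm ((4*Real.pi) ^ (-(d:ℝ)/2)) (u ^ (-(d:ℝ)/2)), ← mul_assoc,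
      ← Real.rpow_add hu, show (d:ℝ)/2 + -(d:ℝ)/2 = 0 by ring, Real.rpow_zero, one_mul]
  calc (Real.sqrt u)^d * ∫ z : EuclideanSpace ℝ (Fin d), Xi d p u (Real.sqrt u • z)
      = (Real.sqrt u)^d * ∫ z : EuclideanSpace ℝ (Fin d), (4 * Real.pi * u) ^ (-(d:ℝ)/2) *
        ((1 + (Real.sqrt u)^p * ‖z‖ ^ p) * (((d:ℝ)/2 + 1) + (1/4) * ‖z‖ ^ 2) *
          Real.exp (-(1/8 * ‖z‖ ^ 2))) := by
        congr 1; exact integral_congr_ae (Filter.Eventually.of_forall hXi_smul)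
    _ = (Real.sqrt u)^d * (4 * Real.pi * u) ^ (-(d:ℝ)/2) * ∫ z : EuclideanSpace ℝ (Fin d),
        (1 + (Real.sqrt u)^p * ‖z‖ ^ p) * (((d:ℝ)/2 + 1) + (1/4) * ‖z‖ ^ 2) *
          Real.exp (-(1/8 * ‖z‖ ^ 2)) := by
        rw [MeasureTheory.integral_const_mul]; ring
    _ = (4 * Real.pi) ^ (-(d:ℝ)/2) * ∫ z : EuclideanSpace ℝ (Fin d),
        (1 + (Real.sqrt u)^p * ‖z‖ ^ p) * (((d:ℝ)/2 + 1) + (1/4) * ‖z‖ ^ 2) *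
          Real.exp (-(1/8 * ‖z‖ ^ 2)) := by rw [e3]
    _ ≤ (4 * Real.pi) ^ (-(d:ℝ)/2) * ((1 + T^(p/2)) * ∫ z : EuclideanSpace ℝ (Fin d), Psi d p z) := by
        apply mul_le_mul_of_nonneg_left _ (Real.rpow_nonneg (by positivity) _)
        rw [← MeasureTheory.integral_const_mul]
        apply integral_mono_of_nonneg
        · filter_upwards with z
          have h1 : (0:ℝ) ≤ ‖z‖ ^ p := Real.rpow_nonneg (norm_nonneg z) _
          have h2 : (0:ℝ) ≤ (Real.sqrt u)^p := Real.rpow_nonneg hsq.le _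
          positivity
        · exact (Psi_integrable d p hp).const_mul _
        · filter_upwards with z
          unfold Psi
          have hsT : (Real.sqrt u)^p ≤ T^(p/2) := by
            have h1 : Real.sqrt u ≤ Real.sqrt T := Real.sqrt_le_sqrt (le_trans huT le_rfl)
            calc (Real.sqrt u)^p ≤ (Real.sqrt T)^p :=
                Real.rpow_le_rpow hsq.le h1 hp
              _ = T^(p/2) := by
                rw [Real.sqrt_eq_rpow, ← Real.rpow_mul hT.le]
                congr 1
                ring
          have h1 : (0:ℝ) ≤ ‖z‖ ^ p := Real.rpow_nonneg (norm_nonneg z) _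
          have h2 : (0:ℝ) ≤ (((d:ℝ)/2 + 1) + (1/4) * ‖z‖ ^ 2) := by positivity
          have h3 : (0:ℝ) < Real.exp (-(1/8 * ‖z‖ ^ 2)) := Real.exp_pos _
          have key : (1 + (Real.sqrt u)^p * ‖z‖ ^ p) ≤ (1 + T^(p/2)) * (1 + ‖z‖ ^ p) := by
            have hT2 : (0:ℝ) ≤ T^(p/2) := Real.rpow_nonneg hT.le _
            nlinarith
          calc (1 + (Real.sqrt u)^p * ‖z‖ ^ p) * (((d:ℝ)/2 + 1) + (1/4) * ‖z‖ ^ 2) *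
              Real.exp (-(1/8 * ‖z‖ ^ 2))
              ≤ ((1 + T^(p/2)) * (1 + ‖z‖ ^ p)) * (((d:ℝ)/2 + 1) + (1/4) * ‖z‖ ^ 2) *
              Real.exp (-(1/8 * ‖z‖ ^ 2)) := by
                apply mul_le_mul_of_nonneg_right (mul_le_mul_of_nonneg_right key h2) h3.le
            _ = (1 + T^(p/2)) * ((1 + ‖z‖ ^ p) * (((d:ℝ)/2 + 1) + (1/4) * ‖z‖ ^ 2) *
              Real.exp (-(1/8 * ‖z‖ ^ 2))) := by ring
    _ = (1 + T^(p/2)) * (4 * Real.pi) ^ (-(d:ℝ)/2) * ∫ z : EuclideanSpace ℝ (Fin d), Psi d p z := by ring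

lemma kernel_bound (d : ℕ) (p T α : ℝ) (hp : 1 ≤ p) (hT : 0 < T) (hα0 : 0 < α) (hα1 : α < 1)
    (s t : ℝ) (hs : 0 < s) (hst : s < t) (htT : t ≤ T) :
    ∫ x, wt d p x * |heatKernel d t x - heatKernel d s x| ≤
      2 * ((1 + T^(p/2)) * (4 * Real.pi) ^ (-(d:ℝ)/2) * ∫ z, Psi d p z) * ((t-s)/s)^(α/2) := by
  have hp0 : (0:ℝ) ≤ p := by linarith
  have ht0 : 0 < t := lt_trans hs hst
  set C1 : ℝ := (1 + T^(p/2)) * (4 * Real.pi) ^ (-(d:ℝ)/2) * ∫ z, Psi d p z with hC1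
  have hC1nn : 0 ≤ C1 := by
    apply mul_nonneg (mul_nonneg _ (Real.rpow_nonneg (by positivity) _))
    · apply integral_nonneg
      intro z
      unfold Psi
      have h1 : (0:ℝ) ≤ ‖z‖ ^ p := Real.rpow_nonneg (norm_nonneg z) _
      positivity
    · have : (0:ℝ) ≤ T^(p/2) := Real.rpow_nonneg hT.le _
      linarith
  have hρ : 0 < (t-s)/s := div_pos (by linarith) hs
  have hρα : 0 ≤ ((t-s)/s)^(α/2) := Real.rpow_nonneg hρ.le _
  rcases le_or_gt 1 ((t-s)/s) with hcase | hcase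
  · -- trivial bound
    have h1 : ∫ x, wt d p x * |heatKernel d t x - heatKernel d s x| ≤
        ∫ x, (Xi d p t x + Xi d p s x) := by
      apply integral_mono_of_nonneg
      · filter_upwards with x
        exact mul_nonneg (wt_nonneg d p hp0 x) (abs_nonneg _)
      · exact (Xi_integrable d p t hp0 ht0).add (Xi_integrable d p s hp0 hs)
      · filter_upwards with x
        have habs : |heatKernel d t x - heatKernel d s x| ≤
            heatKernel d t x + heatKernel d s x := by
          rw [abs_sub_comm]
          have := abs_sub_abs_le_abs_sub (heatKernel d s x) (heatKernel d t x)
          rw [abs_of_nonneg (heatKernel_nonneg d s hs x),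
            abs_of_nonneg (heatKernel_nonneg d t ht0 x)] at *
          rw [abs_sub_comm]
          have h2 := abs_sub (heatKernel d t x) (heatKernel d s x)
          calc |heatKernel d t x - heatKernel d s x| ≤
              |heatKernel d t x| + |heatKernel d s x| := abs_sub _ _
            _ = heatKernel d t x + heatKernel d s x := by
              rw [abs_of_nonneg (heatKernel_nonneg d t ht0 x),
                abs_of_nonneg (heatKernel_nonneg d s hs x)]
        calc wt d p x * |heatKernel d t x - heatKernel d s x|
            ≤ wt d p x * (heatKernel d t x + heatKernel d s x) :=
              mul_le_mul_of_nonneg_left habs (wt_nonneg d p hp0 x)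
          _ = wt d p x * heatKernel d t x + wt d p x * heatKernel d s x := by ring
          _ ≤ Xi d p t x + Xi d p s x :=
              add_le_add (wt_heatKernel_le_Xi d p t hp0 ht0 x)
                (wt_heatKernel_le_Xi d p s hp0 hs x)
    have h2 : ∫ x, (Xi d p t x + Xi d p s x) ≤ 2 * C1 := by
      rw [integral_add (Xi_integrable d p t hp0 ht0) (Xi_integrable d p s hp0 hs)]
      have := Xi_integral_le d p T hp0 hT t ht0 htT
      have := Xi_integral_le d p T hp0 hT s hs (by linarith)
      rw [hC1]; linarith
    have h3 : (1:ℝ) ≤ ((t-s)/s)^(α/2) := by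
      calc (1:ℝ) = 1 ^ (α/2) := (Real.one_rpow _).symm
        _ ≤ ((t-s)/s)^(α/2) := Real.rpow_le_rpow (by norm_num) hcase (by linarith)
    calc ∫ x, wt d p x * |heatKernel d t x - heatKernel d s x| ≤ 2 * C1 := le_trans h1 h2
      _ ≤ 2 * C1 * ((t-s)/s)^(α/2) := by nlinarith
  · -- Lipschitz bound
    have ht2 : t ≤ 2*s := by
      rw [div_lt_one hs] at hcase
      linarith
    have h1 : ∫ x, wt d p x * |heatKernel d t x - heatKernel d s x| ≤
        ∫ x, (t-s)/s * Xi d p s x := by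
      apply integral_mono_of_nonneg
      · filter_upwards with x
        exact mul_nonneg (wt_nonneg d p hp0 x) (abs_nonneg _)
      · exact (Xi_integrable d p s hp0 hs).const_mul _
      · filter_upwards with x
        calc wt d p x * |heatKernel d t x - heatKernel d s x|
            ≤ wt d p x * ((t-s)/s * Theta d s x) :=
              mul_le_mul_of_nonneg_left (heatKernel_diff_le d s t hs hst ht2 x)
                (wt_nonneg d p hp0 x)
          _ = (t-s)/s * Xi d p s x := by unfold Xi; ring
    have h2 : ∫ x, (t-s)/s * Xi d p s x ≤ (t-s)/s * C1 := by
      rw [MeasureTheory.integral_const_mul]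
      exact mul_le_mul_of_nonneg_left (Xi_integral_le d p T hp0 hT s hs (by linarith)) hρ.le
    have h3 : (t-s)/s ≤ ((t-s)/s)^(α/2) := by
      calc (t-s)/s = ((t-s)/s) ^ (1:ℝ) := (Real.rpow_one _).symm
        _ ≤ ((t-s)/s)^(α/2) :=
          Real.rpow_le_rpow_of_exponent_ge hρ hcase.le (by linarith)
    calc ∫ x, wt d p x * |heatKernel d t x - heatKernel d s x|
        ≤ (t-s)/s * C1 := le_trans h1 h2
      _ ≤ ((t-s)/s)^(α/2) * C1 := mul_le_mul_of_nonneg_right h3 hC1nn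
      _ ≤ 2 * C1 * ((t-s)/s)^(α/2) := by nlinarith

lemma wt_absdiff_le (d : ℕ) (p s t : ℝ) (hp : 0 ≤ p) (hs : 0 < s) (ht : 0 < t)
    (x : EuclideanSpace ℝ (Fin d)) :
    wt d p x * |heatKernel d t x - heatKernel d s x| ≤ Xi d p t x + Xi d p s x := by
  have habs : |heatKernel d t x - heatKernel d s x| ≤
      heatKernel d t x + heatKernel d s x := by
    calc |heatKernel d t x - heatKernel d s x| ≤
        |heatKernel d t x| + |heatKernel d s x| := abs_sub _ _
      _ = heatKernel d t x + heatKernel d s x := by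
        rw [abs_of_nonneg (heatKernel_nonneg d t ht x), abs_of_nonneg (heatKernel_nonneg d s hs x)]
  calc wt d p x * |heatKernel d t x - heatKernel d s x|
      ≤ wt d p x * (heatKernel d t x + heatKernel d s x) :=
        mul_le_mul_of_nonneg_left habs (wt_nonneg d p hp x)
    _ = wt d p x * heatKernel d t x + wt d p x * heatKernel d s x := by ring
    _ ≤ Xi d p t x + Xi d p s x :=
        add_le_add (wt_heatKernel_le_Xi d p t hp ht x) (wt_heatKernel_le_Xi d p s hp hs x)

lemma wt_add_le (d : ℕ) (p : ℝ) (hp : 0 ≤ p) (a b : EuclideanSpace ℝ (Fin d)) :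
    wt d p (a + b) ≤ 2^p * wt d p a * wt d p b := by
  have h2p : (1:ℝ) ≤ 2^p := by
    calc (1:ℝ) = 1^p := (Real.one_rpow _).symm
      _ ≤ 2^p := Real.rpow_le_rpow (by norm_num) (by norm_num) hp
  have hA : (0:ℝ) ≤ ‖a‖ ^ p := Real.rpow_nonneg (norm_nonneg a) _
  have hB : (0:ℝ) ≤ ‖b‖ ^ p := Real.rpow_nonneg (norm_nonneg b) _
  have key : ‖a + b‖ ^ p ≤ 2^p * (‖a‖ ^ p + ‖b‖ ^ p) := by
    have h1 : ‖a + b‖ ^ p ≤ (‖a‖ + ‖b‖) ^ p :=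
      Real.rpow_le_rpow (norm_nonneg _) (norm_add_le a b) hp
    have h2 : (‖a‖ + ‖b‖) ^ p ≤ 2^p * (‖a‖ ^ p + ‖b‖ ^ p) := by
      rcases le_total ‖a‖ ‖b‖ with hab | hab
      · calc (‖a‖ + ‖b‖) ^ p ≤ (2 * ‖b‖) ^ p :=
            Real.rpow_le_rpow (by positivity) (by linarith) hp
          _ = 2^p * ‖b‖ ^ p := Real.mul_rpow (by norm_num) (norm_nonneg b)
          _ ≤ 2^p * (‖a‖ ^ p + ‖b‖ ^ p) := by nlinarith
      · calc (‖a‖ + ‖b‖) ^ p ≤ (2 * ‖a‖) ^ p :=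
            Real.rpow_le_rpow (by positivity) (by linarith) hp
          _ = 2^p * ‖a‖ ^ p := Real.mul_rpow (by norm_num) (norm_nonneg a)
          _ ≤ 2^p * (‖a‖ ^ p + ‖b‖ ^ p) := by nlinarith
    linarith
  unfold wt
  nlinarith [mul_nonneg hA hB]

set_option maxHeartbeats 2000000 in
theorem stmt_15 (d : ℕ) (α p T : ℝ) (hα0 : 0 < α) (hα1 : α < 1) (hp : 1 ≤ p) (hT : 0 < T) :
    ∃ c : ℝ, 0 < c ∧ ∀ ℓ : EuclideanSpace ℝ (Fin d) → ℝ,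
      Measurable ℓ → (∀ y, 0 ≤ ℓ y) →
      Integrable (fun y : EuclideanSpace ℝ (Fin d) => (1 + ‖y‖ ^ p) * ℓ y) →
      ∀ s t : ℝ, 0 < s → s < t → t ≤ T →
        ∫ x : EuclideanSpace ℝ (Fin d),
            (1 + ‖x‖ ^ p) * |heatSemigroup d t ℓ x - heatSemigroup d s ℓ x| ≤
          c * (∫ y : EuclideanSpace ℝ (Fin d), (1 + ‖y‖ ^ p) * ℓ y) *
            (t - s) ^ (α / 2) * s ^ (-α / 2) := by
  have hp0 : (0:ℝ) ≤ p := by linarith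
  set C1 : ℝ := (1 + T^(p/2)) * (4 * Real.pi) ^ (-(d:ℝ)/2) * ∫ z, Psi d p z with hC1
  have hC1nn : 0 ≤ C1 := by
    apply mul_nonneg (mul_nonneg _ (Real.rpow_nonneg (by positivity) _))
    · apply integral_nonneg
      intro z
      unfold Psi
      have h1 : (0:ℝ) ≤ ‖z‖ ^ p := Real.rpow_nonneg (norm_nonneg z) _
      positivity
    · have : (0:ℝ) ≤ T^(p/2) := Real.rpow_nonneg hT.le _
      linarith
  have h2p : (0:ℝ) < 2^p := Real.rpow_pos_of_pos (by norm_num) _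
  refine ⟨2^p * (2 * C1) + 1, by nlinarith, ?_⟩
  intro ℓ hm hℓ0 hInt s t hs hst htT
  have ht0 : 0 < t := lt_trans hs hst
  -- notation
  set k : EuclideanSpace ℝ (Fin d) → ℝ :=
    fun z => heatKernel d t z - heatKernel d s z with hk
  set Kb : ℝ := 2 * C1 * ((t-s)/s)^(α/2) with hKb
  have hρα : (0:ℝ) ≤ ((t-s)/s)^(α/2) := Real.rpow_nonneg (div_nonneg (by linarith) hs.le) _
  have hKbnn : 0 ≤ Kb := by
    rw [hKb]
    apply mul_nonneg (by linarith) hρα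
  set M : ℝ := ∫ y : EuclideanSpace ℝ (Fin d), (1 + ‖y‖ ^ p) * ℓ y with hM
  have hMnn : 0 ≤ M := by
    apply integral_nonneg
    intro y
    have h1 : (0:ℝ) ≤ ‖y‖ ^ p := Real.rpow_nonneg (norm_nonneg y) _
    have := hℓ0 y
    positivity
  -- ℓ is integrable
  have hℓInt : Integrable ℓ := by
    refine hInt.mono' hm.aestronglyMeasurable ?_
    filter_upwards with y
    rw [Real.norm_eq_abs, abs_of_nonneg (hℓ0 y)]
    have h1 : (0:ℝ) ≤ ‖y‖ ^ p := Real.rpow_nonneg (norm_nonneg y) _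
    nlinarith [hℓ0 y]
  -- |k| is continuous and bounded
  have hk_cont : Continuous k := (heatKernel_cont d t).sub (heatKernel_cont d s)
  have hk_bdd : ∀ z, |k z| ≤ (4 * Real.pi * t) ^ (-(d : ℝ)/2) + (4 * Real.pi * s) ^ (-(d : ℝ)/2) := by
    intro z
    rw [hk]
    calc |heatKernel d t z - heatKernel d s z| ≤ |heatKernel d t z| + |heatKernel d s z| :=
        abs_sub _ _
      _ ≤ (4 * Real.pi * t) ^ (-(d : ℝ)/2) + (4 * Real.pi * s) ^ (-(d : ℝ)/2) := by
        rw [abs_of_nonneg (heatKernel_nonneg d t ht0 z), abs_of_nonneg (heatKernel_nonneg d s hs z)]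
        exact add_le_add (heatKernel_le d t ht0 z) (heatKernel_le d s hs z)
  -- integrability of kernel * ℓ for each x
  have hker_int : ∀ (u : ℝ), 0 < u → ∀ x, Integrable
      (fun y => heatKernel d u (x - y) * ℓ y) := by
    intro u hu x
    refine hℓInt.bdd_mul ?_ (c := (4 * Real.pi * u) ^ (-(d : ℝ)/2)) (Filter.Eventually.of_forall fun y => ?_)
    · exact ((heatKernel_cont d u).comp (continuous_const.sub continuous_id)).aestronglyMeasurable
    · rw [Real.norm_eq_abs, abs_of_nonneg (heatKernel_nonneg d u hu _)]
      exact heatKernel_le d u hu _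
  have habs_int : ∀ x, Integrable (fun y => |k (x - y)| * ℓ y) := by
    intro x
    refine hℓInt.bdd_mul ?_
      (c := (4 * Real.pi * t) ^ (-(d : ℝ)/2) + (4 * Real.pi * s) ^ (-(d : ℝ)/2)) (Filter.Eventually.of_forall fun y => ?_)
    · exact (hk_cont.abs.comp (continuous_const.sub continuous_id)).aestronglyMeasurable
    · rw [Real.norm_eq_abs, abs_abs]
      exact hk_bdd _
  -- step 1: pointwise bound on semigroup difference
  have step1 : ∀ x, |heatSemigroup d t ℓ x - heatSemigroup d s ℓ x| ≤
      ∫ y, |k (x - y)| * ℓ y := by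
    intro x
    unfold heatSemigroup
    rw [← integral_sub (hker_int t ht0 x) (hker_int s hs x)]
    calc |∫ y, (heatKernel d t (x - y) * ℓ y - heatKernel d s (x - y) * ℓ y)| ≤
        ∫ y, |heatKernel d t (x - y) * ℓ y - heatKernel d s (x - y) * ℓ y| :=
          by
            have hni := MeasureTheory.norm_integral_le_integral_norm
              (fun y => heatKernel d t (x - y) * ℓ y - heatKernel d s (x - y) * ℓ y)
              (μ := (volume : Measure (EuclideanSpace ℝ (Fin d))))
            simpa [Real.norm_eq_abs] using hni
      _ = ∫ y, |k (x - y)| * ℓ y := by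
          apply integral_congr_ae
          filter_upwards with y
          rw [hk]
          rw [show heatKernel d t (x - y) * ℓ y - heatKernel d s (x - y) * ℓ y
            = (heatKernel d t (x - y) - heatKernel d s (x - y)) * ℓ y by ring]
          rw [abs_mul, abs_of_nonneg (hℓ0 y)]
  -- measurability of the semigroup
  have hsemi_meas : ∀ (u : ℝ), AEStronglyMeasurable (heatSemigroup d u ℓ) := by
    intro u
    have hf : StronglyMeasurable (fun q : (EuclideanSpace ℝ (Fin d)) × (EuclideanSpace ℝ (Fin d)) =>
        heatKernel d u (q.1 - q.2) * ℓ q.2) := by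
      apply Measurable.stronglyMeasurable
      exact (((heatKernel_cont d u).comp (continuous_fst.sub continuous_snd)).measurable).mul
        (hm.comp measurable_snd)
    exact hf.integral_prod_right'.aestronglyMeasurable
  -- integrability of translated weighted kernel
  have hXiInt : Integrable (fun x => Xi d p t x + Xi d p s x) :=
    (Xi_integrable d p t hp0 ht0).add (Xi_integrable d p s hp0 hs)
  have hwk_int : Integrable (fun x => wt d p x * |k x|) := by
    refine hXiInt.mono' ((wt_cont d p hp0).mul hk_cont.abs).aestronglyMeasurable ?_
    filter_upwards with x
    rw [Real.norm_eq_abs, abs_of_nonneg (mul_nonneg (wt_nonneg d p hp0 x) (abs_nonneg _))]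
    exact wt_absdiff_le d p s t hp0 hs ht0 x
  have hwk_trans_int : ∀ y, Integrable (fun x => wt d p x * |k (x - y)|) := by
    intro y
    have hmaj : Integrable (fun x => (2^p * wt d p y) * (Xi d p t (x - y) + Xi d p s (x - y))) :=
      (hXiInt.comp_sub_right y).const_mul _
    refine hmaj.mono' ((wt_cont d p hp0).mul
      (hk_cont.abs.comp (continuous_id.sub continuous_const))).aestronglyMeasurable ?_
    filter_upwards with x
    rw [Real.norm_eq_abs, abs_of_nonneg (mul_nonneg (wt_nonneg d p hp0 x) (abs_nonneg _))]
    have h1 : wt d p x ≤ 2^p * wt d p (x - y) * wt d p y := by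
      have := wt_add_le d p hp0 (x - y) y
      rwa [sub_add_cancel] at this
    calc wt d p x * |k (x - y)| ≤ (2^p * wt d p (x - y) * wt d p y) * |k (x - y)| :=
        mul_le_mul_of_nonneg_right h1 (abs_nonneg _)
      _ = (2^p * wt d p y) * (wt d p (x - y) * |k (x - y)|) := by ring
      _ ≤ (2^p * wt d p y) * (Xi d p t (x - y) + Xi d p s (x - y)) := by
          apply mul_le_mul_of_nonneg_left (wt_absdiff_le d p s t hp0 hs ht0 _)
          have := wt_nonneg d p hp0 y
          positivity
  -- translated integral bound
  have htrans : ∀ y, ∫ x, wt d p x * |k (x - y)| ≤ (2^p * wt d p y) * Kb := by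
    intro y
    have e1 : ∫ x, wt d p x * |k (x - y)| = ∫ x, wt d p (x + y) * |k x| := by
      have := MeasureTheory.integral_sub_right_eq_self
        (μ := (volume : Measure (EuclideanSpace ℝ (Fin d))))
        (fun x => wt d p (x + y) * |k x|) y
      rw [← this]
      apply integral_congr_ae
      filter_upwards with x
      rw [sub_add_cancel]
    rw [e1]
    have e2 : ∫ x, wt d p (x + y) * |k x| ≤ ∫ x, (2^p * wt d p y) * (wt d p x * |k x|) := by
      apply integral_mono_of_nonneg
      · filter_upwards with x
        exact mul_nonneg (wt_nonneg d p hp0 _) (abs_nonneg _)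
      · exact hwk_int.const_mul _
      · filter_upwards with x
        have h1 : wt d p (x + y) ≤ 2^p * wt d p x * wt d p y := wt_add_le d p hp0 x y
        calc wt d p (x + y) * |k x| ≤ (2^p * wt d p x * wt d p y) * |k x| :=
            mul_le_mul_of_nonneg_right h1 (abs_nonneg _)
          _ = (2^p * wt d p y) * (wt d p x * |k x|) := by ring
    have e3 : ∫ x, (2^p * wt d p y) * (wt d p x * |k x|) = (2^p * wt d p y) *
        ∫ x, wt d p x * |k x| := MeasureTheory.integral_const_mul _ _
    have e4 : ∫ x, wt d p x * |k x| ≤ Kb := by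
      rw [hKb, hC1]
      exact kernel_bound d p T α hp hT hα0 hα1 s t hs hst htT
    have hwy : 0 ≤ 2^p * wt d p y := by
      have := wt_nonneg d p hp0 y
      positivity
    calc ∫ x, wt d p (x + y) * |k x| ≤ (2^p * wt d p y) * ∫ x, wt d p x * |k x| := by
          rw [← e3]; exact e2
      _ ≤ (2^p * wt d p y) * Kb := mul_le_mul_of_nonneg_left e4 hwy
  -- main chain via lintegrals
  have hBM : (0:ℝ) ≤ 2^p * Kb * M := by positivity
  have key : ∫ x, wt d p x * |heatSemigroup d t ℓ x - heatSemigroup d s ℓ x| ≤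
      2^p * Kb * M := by
    have hnn : 0 ≤ᵐ[volume] fun x =>
        wt d p x * |heatSemigroup d t ℓ x - heatSemigroup d s ℓ x| := by
      filter_upwards with x
      exact mul_nonneg (wt_nonneg d p hp0 x) (abs_nonneg _)
    have hsm : AEStronglyMeasurable (fun x =>
        wt d p x * |heatSemigroup d t ℓ x - heatSemigroup d s ℓ x|) := by
      apply ((wt_cont d p hp0).aestronglyMeasurable).mul
      have h1 := ((hsemi_meas t).sub (hsemi_meas s)).norm
      simpa [Real.norm_eq_abs] using h1
    rw [integral_eq_lintegral_of_nonneg_ae hnn hsm]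
    apply ENNReal.toReal_le_of_le_ofReal hBM
    have hprod_meas : AEMeasurable (fun z : (EuclideanSpace ℝ (Fin d)) × (EuclideanSpace ℝ (Fin d)) =>
        ENNReal.ofReal (wt d p z.1 * (|k (z.1 - z.2)| * ℓ z.2)))
        (volume.prod volume) := by
      apply Measurable.aemeasurable
      apply Measurable.ennreal_ofReal
      exact (((wt_cont d p hp0).measurable).comp measurable_fst).mul
        (((hk_cont.abs.measurable).comp (measurable_fst.sub measurable_snd)).mul
          (hm.comp measurable_snd))
    calc ∫⁻ x, ENNReal.ofReal (wt d p x * |heatSemigroup d t ℓ x - heatSemigroup d s ℓ x|)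
        ≤ ∫⁻ x, ∫⁻ y, ENNReal.ofReal (wt d p x * (|k (x - y)| * ℓ y)) := by
          apply lintegral_mono
          intro x
          calc ENNReal.ofReal (wt d p x * |heatSemigroup d t ℓ x - heatSemigroup d s ℓ x|)
              ≤ ENNReal.ofReal (wt d p x * ∫ y, |k (x - y)| * ℓ y) :=
                ENNReal.ofReal_le_ofReal
                  (mul_le_mul_of_nonneg_left (step1 x) (wt_nonneg d p hp0 x))
            _ = ENNReal.ofReal (∫ y, wt d p x * (|k (x - y)| * ℓ y)) := by
                rw [MeasureTheory.integral_const_mul]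
            _ = ∫⁻ y, ENNReal.ofReal (wt d p x * (|k (x - y)| * ℓ y)) := by
                apply MeasureTheory.ofReal_integral_eq_lintegral_ofReal
                  ((habs_int x).const_mul _)
                filter_upwards with y
                exact mul_nonneg (wt_nonneg d p hp0 x)
                  (mul_nonneg (abs_nonneg _) (hℓ0 y))
      _ = ∫⁻ y, ∫⁻ x, ENNReal.ofReal (wt d p x * (|k (x - y)| * ℓ y)) :=
          lintegral_lintegral_swap hprod_meas
      _ ≤ ∫⁻ y, ENNReal.ofReal ((2^p * Kb) * ((1 + ‖y‖ ^ p) * ℓ y)) := by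
          apply lintegral_mono
          intro y
          have e5 : ∀ x, ENNReal.ofReal (wt d p x * (|k (x - y)| * ℓ y)) =
              ENNReal.ofReal (wt d p x * |k (x - y)|) * ENNReal.ofReal (ℓ y) := by
            intro x
            rw [← ENNReal.ofReal_mul (mul_nonneg (wt_nonneg d p hp0 x) (abs_nonneg _))]
            congr 1
            ring
          calc ∫⁻ x, ENNReal.ofReal (wt d p x * (|k (x - y)| * ℓ y))
              = ∫⁻ x, ENNReal.ofReal (wt d p x * |k (x - y)|) * ENNReal.ofReal (ℓ y) := by
                apply lintegral_congr
                exact e5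
            _ = (∫⁻ x, ENNReal.ofReal (wt d p x * |k (x - y)|)) * ENNReal.ofReal (ℓ y) :=
                lintegral_mul_const' _ _ ENNReal.ofReal_ne_top
            _ = ENNReal.ofReal (∫ x, wt d p x * |k (x - y)|) * ENNReal.ofReal (ℓ y) := by
                rw [MeasureTheory.ofReal_integral_eq_lintegral_ofReal (hwk_trans_int y)
                  (by filter_upwards with x
                      exact mul_nonneg (wt_nonneg d p hp0 x) (abs_nonneg _))]
            _ ≤ ENNReal.ofReal ((2^p * wt d p y) * Kb) * ENNReal.ofReal (ℓ y) :=
                mul_le_mul_left (ENNReal.ofReal_le_ofReal (htrans y)) _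
            _ = ENNReal.ofReal ((2^p * Kb) * ((1 + ‖y‖ ^ p) * ℓ y)) := by
                rw [← ENNReal.ofReal_mul (by
                  have := wt_nonneg d p hp0 y
                  positivity)]
                congr 1
                unfold wt
                ring
      _ = ENNReal.ofReal (2^p * Kb) * ∫⁻ y, ENNReal.ofReal ((1 + ‖y‖ ^ p) * ℓ y) := by
          rw [← lintegral_const_mul' _ _ ENNReal.ofReal_ne_top]
          apply lintegral_congr
          intro y
          rw [← ENNReal.ofReal_mul (by positivity)]
      _ = ENNReal.ofReal (2^p * Kb) * ENNReal.ofReal M := by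
          rw [MeasureTheory.ofReal_integral_eq_lintegral_ofReal hInt
            (by filter_upwards with y
                have h1 : (0:ℝ) ≤ ‖y‖ ^ p := Real.rpow_nonneg (norm_nonneg y) _
                have := hℓ0 y
                positivity)]
      _ = ENNReal.ofReal (2^p * Kb * M) := by
          rw [← ENNReal.ofReal_mul (by positivity)]
  -- conclude
  have hpow : ((t-s)/s)^(α/2) = (t - s) ^ (α / 2) * s ^ (-α / 2) := by
    rw [Real.div_rpow (by linarith : (0:ℝ) ≤ t - s) hs.le,
      show (-α/2 : ℝ) = -(α/2) by ring, Real.rpow_neg hs.le, div_eq_mul_inv]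
  have hfin : 2^p * Kb * M ≤ (2^p * (2 * C1) + 1) * M * (t - s) ^ (α / 2) * s ^ (-α / 2) := by
    have e : (2^p * (2 * C1) + 1) * M * (t - s) ^ (α / 2) * s ^ (-α / 2)
        = (2^p * (2 * C1) + 1) * M * ((t-s)/s)^(α/2) := by rw [hpow]; ring
    rw [e, hKb]
    nlinarith [mul_nonneg hMnn hρα]
  calc ∫ x : EuclideanSpace ℝ (Fin d),
      (1 + ‖x‖ ^ p) * |heatSemigroup d t ℓ x - heatSemigroup d s ℓ x|
      = ∫ x, wt d p x * |heatSemigroup d t ℓ x - heatSemigroup d s ℓ x| := by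
        apply integral_congr_ae
        filter_upwards with x
        simp only [wt]
    _ ≤ 2^p * Kb * M := key
    _ ≤ (2^p * (2 * C1) + 1) * M * (t - s) ^ (α / 2) * s ^ (-α / 2) := hfin
end
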